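/- arXiv:1605.01708 — 4 statements merged into one kernel-verified Lean document; each statement's English description precedes it below -/
import Mathlib

section
/- Let S = {i₁ < i₂ < ⋯ < i_s} be an (n+1)-admissible set and let q ≥ max(S). Define S_{i_ℓ} = {i₁,...,i_{ℓ-1}, i_ℓ - 1, i_{ℓ+1} - 1, ..., i_s - 1} and Ŝ_{i_ℓ} = {i₁,...,i_{ℓ-1}, i_{ℓ+1} - 1, ..., i_s - 1} (with i_ℓ omitted). Then |P_S(q+1)| = 2|P_S(q)| + 2·Σ_{ℓ=1}^{s} |P_{S_{i_ℓ}}(q)| + Σ_{ℓ=1}^{s} |P_{Ŝ_{i_ℓ}}(q)|. -/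
/-- The peak set (1-based indices) of a list: `i` is a peak if `1 < i < length`
and the `(i-1)`-st entry is less than the `i`-th, which is greater than the `(i+1)`-st. -/
def peaks (l : List ℕ) : Finset ℕ :=
  (Finset.Icc 2 (l.length - 1)).filter (fun i =>
    l.getD (i - 2) 0 < l.getD (i - 1) 0 ∧ l.getD i 0 < l.getD (i - 1) 0)

/-- `l` is (the one-line notation of) a permutation of `{1,...,n}`. -/
def IsPermOf (n : ℕ) (l : List ℕ) : Prop := l.Perm (List.range' 1 n)

/-- The number of permutations of `{1,...,n}` with peak set exactly `S`. -/
noncomputable def numPerms (n : ℕ) (S : Finset ℕ) : ℕ :=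
  {l : List ℕ | IsPermOf n l ∧ peaks l = S}.ncard

/-- `S` is `n`-admissible: some permutation of `{1,...,n}` has peak set exactly `S`. -/
def Admissible (n : ℕ) (S : Finset ℕ) : Prop :=
  ∃ l : List ℕ, IsPermOf n l ∧ peaks l = S

/-- `S_{i}`: keep the elements of `S` below `i`, and decrease `i` and every larger element by 1. -/
def Sdown (S : Finset ℕ) (i : ℕ) : Finset ℕ :=
  S.filter (· < i) ∪ (S.filter (i ≤ ·)).image (· - 1)

/-- `Ŝ_{i}`: keep the elements of `S` below `i`, omit `i`, and decrease every larger element by 1. -/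
def Shat (S : Finset ℕ) (i : ℕ) : Finset ℕ :=
  S.filter (· < i) ∪ (S.filter (i < ·)).image (· - 1)

/-! ### Auxiliary lemmas -/

section ListLemmas

lemma mem_peaks {l : List ℕ} {i : ℕ} :
    i ∈ peaks l ↔ 2 ≤ i ∧ i ≤ l.length - 1 ∧
      l.getD (i - 2) 0 < l.getD (i - 1) 0 ∧ l.getD i 0 < l.getD (i - 1) 0 := by
  simp [peaks, Finset.mem_filter, Finset.mem_Icc, and_assoc]

lemma peaks_not_adjacent {l : List ℕ} {i : ℕ} (h1 : i ∈ peaks l) (h2 : i + 1 ∈ peaks l) :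
    False := by
  have a1 := mem_peaks.1 h1
  have a2 := mem_peaks.1 h2
  rw [show i + 1 - 2 = i - 1 from by omega, Nat.add_sub_cancel] at a2
  omega

lemma getD_insertIdx (a : ℕ) : ∀ (j : ℕ) (l : List ℕ), j ≤ l.length → ∀ k,
    (l.insertIdx j a).getD k 0 =
      if k < j then l.getD k 0 else if k = j then a else l.getD (k - 1) 0
  | 0, l, _, k => by
    cases k <;> simp [List.insertIdx_zero]
  | (j+1), [], h, k => by simp at h
  | (j+1), x :: t, h, k => by
    rw [List.insertIdx_succ_cons]
    cases k with
    | zero => simp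
    | succ k =>
      simp only [List.getD_cons_succ]
      rw [getD_insertIdx a j t (by simpa using h) k]
      by_cases h1 : k < j
      · rw [if_pos h1, if_pos (by omega)]
      · rw [if_neg h1]
        by_cases h2 : k = j
        · rw [if_pos h2, if_neg (by omega), if_pos (by omega)]
        · rw [if_neg h2, if_neg (by omega), if_neg (by omega)]
          obtain ⟨m, rfl⟩ : ∃ m, k = m + 1 := ⟨k - 1, by omega⟩
          simp

lemma indexOf_insertIdx (a : ℕ) : ∀ (j : ℕ) (l : List ℕ), j ≤ l.length → a ∉ l →
    (l.insertIdx j a).idxOf a = j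
  | 0, l, _, _ => by simp [List.insertIdx_zero]
  | (j+1), [], h, _ => by simp at h
  | (j+1), x :: t, h, hm => by
    rw [List.insertIdx_succ_cons, List.idxOf_cons_ne _ (by simp at hm; exact fun e => hm.1 e.symm),
      indexOf_insertIdx a j t (by simpa using h) (by simp at hm; exact hm.2)]

lemma erase_insertIdx (a : ℕ) : ∀ (j : ℕ) (l : List ℕ), j ≤ l.length → a ∉ l →
    (l.insertIdx j a).erase a = l
  | 0, l, _, _ => by simp [List.insertIdx_zero]
  | (j+1), [], h, _ => by simp at h
  | (j+1), x :: t, h, hm => by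
    rw [List.insertIdx_succ_cons, List.erase_cons_tail (by simp at hm ⊢; exact fun e => hm.1 e.symm),
      erase_insertIdx a j t (by simpa using h) (by simp at hm; exact hm.2)]

lemma insertIdx_indexOf_erase (a : ℕ) : ∀ (l : List ℕ), a ∈ l →
    (l.erase a).insertIdx (l.idxOf a) a = l
  | x :: t, hm => by
    by_cases hx : x = a
    · subst hx
      simp [List.insertIdx_zero]
    · rw [List.erase_cons_tail (by simpa using hx),
        List.idxOf_cons_ne _ (fun e => hx e), List.insertIdx_succ_cons,
        insertIdx_indexOf_erase a t ((List.mem_cons.1 hm).resolve_left (fun e => hx e.symm))]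

lemma getD_lt_of_forall {l : List ℕ} {q : ℕ} (hb : ∀ x ∈ l, x < q + 1) (k : ℕ) :
    l.getD k 0 < q + 1 := by
  by_cases h : k < l.length
  · rw [List.getD_eq_getElem l 0 h]
    exact hb _ (List.getElem_mem h)
  · rw [List.getD_eq_default l 0 (by omega)]
    omega

lemma mem_peaks_insertIdx {q j : ℕ} {τ : List ℕ} (hlen : τ.length = q)
    (hb : ∀ x ∈ τ, x < q + 1) (hj : j ≤ q) (i : ℕ) :
    i ∈ peaks (τ.insertIdx j (q + 1)) ↔
      (i ∈ peaks τ ∧ i < j) ∨ (1 ≤ j ∧ j + 1 ≤ q ∧ i = j + 1) ∨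
        (j + 3 ≤ i ∧ i - 1 ∈ peaks τ) := by
  have hlen' : (τ.insertIdx j (q + 1)).length = q + 1 := by
    rw [List.length_insertIdx, if_pos (by omega), hlen]
  have hg := getD_insertIdx (q + 1) j τ (by omega)
  by_cases h2 : 2 ≤ i
  · by_cases hA : i < j
    · have e0 : (τ.insertIdx j (q+1)).getD (i-2) 0 = τ.getD (i-2) 0 := by
        rw [hg]; rw [if_pos (by omega)]
      have e1 : (τ.insertIdx j (q+1)).getD (i-1) 0 = τ.getD (i-1) 0 := by
        rw [hg]; rw [if_pos (by omega)]
      have e2 : (τ.insertIdx j (q+1)).getD i 0 = τ.getD i 0 := by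
        rw [hg]; rw [if_pos (by omega)]
      simp only [mem_peaks, hlen', hlen, e0, e1, e2]
      omega
    · by_cases hB : i = j
      · have e1 : (τ.insertIdx j (q+1)).getD (i-1) 0 = τ.getD (i-1) 0 := by
          rw [hg]; rw [if_pos (by omega)]
        have e2 : (τ.insertIdx j (q+1)).getD i 0 = q + 1 := by
          rw [hg]; rw [if_neg (by omega), if_pos (by omega)]
        have hb1 := getD_lt_of_forall hb (i-1)
        simp only [mem_peaks, hlen', hlen, e1, e2]
        omega
      · by_cases hC : i = j + 1
        · have e0 : (τ.insertIdx j (q+1)).getD (i-2) 0 = τ.getD (i-2) 0 := by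
            rw [hg]; rw [if_pos (by omega)]
          have e1 : (τ.insertIdx j (q+1)).getD (i-1) 0 = q + 1 := by
            rw [hg]; rw [if_neg (by omega), if_pos (by omega)]
          have e2 : (τ.insertIdx j (q+1)).getD i 0 = τ.getD (i-1) 0 := by
            rw [hg]; rw [if_neg (by omega), if_neg (by omega)]
          have hb0 := getD_lt_of_forall hb (i-2)
          have hb1 := getD_lt_of_forall hb (i-1)
          simp only [mem_peaks, hlen', hlen, e0, e1, e2]
          omega
        · by_cases hD : i = j + 2
          · have e0 : (τ.insertIdx j (q+1)).getD (i-2) 0 = q + 1 := by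
              rw [hg]; rw [if_neg (by omega), if_pos (by omega)]
            have e1 : (τ.insertIdx j (q+1)).getD (i-1) 0 = τ.getD (i-1-1) 0 := by
              rw [hg]; rw [if_neg (by omega), if_neg (by omega)]
            have hb1 := getD_lt_of_forall hb (i-1-1)
            simp only [mem_peaks, hlen', hlen, e0, e1]
            omega
          · have hE : j + 3 ≤ i := by omega
            have e0 : (τ.insertIdx j (q+1)).getD (i-2) 0 = τ.getD (i-2-1) 0 := by
              rw [hg]; rw [if_neg (by omega), if_neg (by omega)]
            have e1 : (τ.insertIdx j (q+1)).getD (i-1) 0 = τ.getD (i-1-1) 0 := by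
              rw [hg]; rw [if_neg (by omega), if_neg (by omega)]
            have e2 : (τ.insertIdx j (q+1)).getD i 0 = τ.getD (i-1) 0 := by
              rw [hg]; rw [if_neg (by omega), if_neg (by omega)]
            simp only [mem_peaks, hlen', hlen, e0, e1, e2]
            rw [show (i - 1 - 2 : ℕ) = i - 2 - 1 from by omega]
            omega
  · simp only [mem_peaks, hlen', hlen]
    omega

end ListLemmas

noncomputable section PermsF

def permsF (n : ℕ) : Finset (List ℕ) := (List.range' 1 n).permutations.toFinset

lemma mem_permsF {n : ℕ} {l : List ℕ} : l ∈ permsF n ↔ IsPermOf n l := by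
  simp [permsF, List.mem_toFinset, List.mem_permutations, IsPermOf]

lemma numPerms_eq (n : ℕ) (S : Finset ℕ) :
    numPerms n S = ((permsF n).filter (fun l => peaks l = S)).card := by
  rw [numPerms, ← Set.ncard_coe_finset]
  congr 1
  ext l
  simp [mem_permsF]

lemma numPerms_adj_zero (q : ℕ) {T : Finset ℕ} {x : ℕ} (hx : x ∈ T) (hx1 : x + 1 ∈ T) :
    numPerms q T = 0 := by
  rw [numPerms]
  convert Set.ncard_empty (List ℕ)
  rw [Set.eq_empty_iff_forall_notMem]
  rintro l ⟨-, hpk⟩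
  exact peaks_not_adjacent (hpk ▸ hx) (hpk ▸ hx1)

lemma length_of_permsF {n : ℕ} {l : List ℕ} (h : l ∈ permsF n) : l.length = n := by
  rw [mem_permsF] at h
  simpa using h.length_eq

lemma mem_of_permsF {n : ℕ} {l : List ℕ} (h : l ∈ permsF n) {x : ℕ} (hx : x ∈ l) :
    1 ≤ x ∧ x ≤ n := by
  rw [mem_permsF] at h
  have := h.mem_iff.1 hx
  rw [List.mem_range'_1] at this
  omega

lemma erase_range' (q : ℕ) : (List.range' 1 (q + 1)).erase (q + 1) = List.range' 1 q := by
  rw [List.range'_1_concat, Nat.add_comm 1 q,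
    List.erase_append_right _ (fun h => by rw [List.mem_range'_1] at h; omega),
    List.erase_cons_head, List.append_nil]

lemma card_step (q : ℕ) (S : Finset ℕ) :
    numPerms (q + 1) S = ∑ j ∈ Finset.range (q + 1),
      ((permsF q).filter (fun τ => peaks (τ.insertIdx j (q + 1)) = S)).card := by
  rw [numPerms_eq]
  rw [Finset.card_eq_sum_card_fiberwise
    (f := fun σ => σ.idxOf (q + 1)) (t := Finset.range (q + 1))
    (fun σ hσ => by
      rw [Finset.mem_coe, Finset.mem_filter] at hσ
      rw [Finset.mem_coe, Finset.mem_range]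
      have h1 : q + 1 ∈ σ := by
        rw [mem_permsF] at hσ
        exact hσ.1.mem_iff.2 (by rw [List.mem_range'_1]; omega)
      calc σ.idxOf (q+1) < σ.length := List.idxOf_lt_length_iff.2 h1
        _ = q + 1 := length_of_permsF hσ.1)]
  refine Finset.sum_congr rfl (fun j hj => ?_)
  rw [Finset.mem_range] at hj
  refine Finset.card_bij' (fun σ _ => σ.erase (q + 1)) (fun τ _ => τ.insertIdx j (q + 1))
    ?_ ?_ ?_ ?_
  · intro σ hσ
    simp only [Finset.mem_filter] at hσ ⊢
    obtain ⟨⟨hσp, hσS⟩, hσj⟩ := hσ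
    have hperm : IsPermOf q (σ.erase (q+1)) := by
      have := (mem_permsF.1 hσp).erase (q+1)
      rwa [erase_range' q] at this
    refine ⟨mem_permsF.2 hperm, ?_⟩
    rw [← hσj, insertIdx_indexOf_erase (q+1) σ (by
      exact (mem_permsF.1 hσp).mem_iff.2 (by rw [List.mem_range'_1]; omega))]
    exact hσS
  · intro τ hτ
    simp only [Finset.mem_filter] at hτ ⊢
    obtain ⟨hτp, hτS⟩ := hτ
    have hlen : τ.length = q := length_of_permsF hτp
    have hnm : (q+1) ∉ τ := fun h => by have := mem_of_permsF hτp h; omega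
    have hperm : IsPermOf (q+1) (τ.insertIdx j (q+1)) := by
      refine ((List.perm_insertIdx (q+1) τ (by omega)).trans ?_)
      refine ((mem_permsF.1 hτp).cons (q+1)).trans ?_
      rw [List.range'_1_concat, Nat.add_comm 1 q]
      exact (List.perm_append_singleton _ _).symm
    exact ⟨⟨mem_permsF.2 hperm, hτS⟩, indexOf_insertIdx (q+1) j τ (by omega) hnm⟩
  · intro σ hσ
    simp only [Finset.mem_filter] at hσ
    obtain ⟨⟨hσp, _⟩, hσj⟩ := hσ
    show List.insertIdx (σ.erase (q+1)) j (q+1) = σ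
    rw [← hσj]
    exact insertIdx_indexOf_erase (q+1) σ
      ((mem_permsF.1 hσp).mem_iff.2 (by rw [List.mem_range'_1]; omega))
  · intro τ hτ
    simp only [Finset.mem_filter] at hτ
    have hlen : τ.length = q := length_of_permsF hτ.1
    show (List.insertIdx τ j (q+1)).erase (q+1) = τ
    exact erase_insertIdx (q+1) j τ (by omega)
      (fun h => by have := mem_of_permsF hτ.1 h; omega)

end PermsF

section FinsetLemmas

lemma mem_Sdown {S : Finset ℕ} {p i : ℕ} :
    i ∈ Sdown S p ↔ (i ∈ S ∧ i < p) ∨ (∃ s, s ∈ S ∧ p ≤ s ∧ s - 1 = i) := by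
  simp [Sdown, Finset.mem_union, Finset.mem_filter, Finset.mem_image, and_assoc]

lemma mem_Shat {S : Finset ℕ} {p i : ℕ} :
    i ∈ Shat S p ↔ (i ∈ S ∧ i < p) ∨ (∃ s, s ∈ S ∧ p < s ∧ s - 1 = i) := by
  simp [Shat, Finset.mem_union, Finset.mem_filter, Finset.mem_image, and_assoc]

variable {S T : Finset ℕ} {j : ℕ}

lemma memA (hm : j ∉ S) (hpp : j + 2 ∉ S) :
    ∀ i, i ∈ Shat S (j + 1) ↔ (i ∈ S ∧ i < j) ∨ (i + 1 ∈ S ∧ j + 2 ≤ i) := by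
  intro i
  rw [mem_Shat]
  constructor
  · rintro (⟨h1, h2⟩ | ⟨s, hs, h1, rfl⟩)
    · refine Or.inl ⟨h1, ?_⟩
      rcases Nat.lt_or_ge i j with h | h
      · exact h
      · have : i = j := by omega
        exact absurd h1 (by rw [this]; exact hm)
    · have hs2 : j + 3 ≤ s := by
        rcases Nat.lt_or_ge (j+2) s with h | h
        · omega
        · have : s = j + 2 := by omega
          exact absurd (this ▸ hs) hpp
      right
      constructor
      · rw [Nat.sub_add_cancel (by omega)]; exact hs
      · omega
  · rintro (⟨h1, h2⟩ | ⟨h1, h2⟩)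
    · exact Or.inl ⟨h1, by omega⟩
    · exact Or.inr ⟨i + 1, h1, by omega, by omega⟩

lemma crux_back (hp : j + 1 ∈ S) (hm : j ∉ S) (hpp : j + 2 ∉ S)
    {B : Finset ℕ} (hB : ∀ b ∈ B, b = j ∨ b = j + 1) (hT : T = Shat S (j + 1) ∪ B) :
    ∀ i, ((i ∈ T ∧ i < j) ∨ i = j + 1 ∨ (j + 3 ≤ i ∧ i - 1 ∈ T)) ↔ i ∈ S := by
  have hA := memA hm hpp
  intro i
  constructor
  · rintro (⟨h1, h2⟩ | rfl | ⟨h1, h2⟩)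
    · rw [hT, Finset.mem_union] at h1
      rcases h1 with h1 | h1
      · rcases (hA i).1 h1 with ⟨h, _⟩ | ⟨_, h⟩
        · exact h
        · omega
      · rcases hB i h1 with rfl | rfl <;> omega
    · exact hp
    · rw [hT, Finset.mem_union] at h2
      rcases h2 with h2 | h2
      · rcases (hA _).1 h2 with ⟨_, h⟩ | ⟨h, _⟩
        · omega
        · rwa [Nat.sub_add_cancel (by omega)] at h
      · rcases hB _ h2 with h | h <;> omega
  · intro hiS
    rcases Nat.lt_trichotomy i j with h | rfl | h
    · exact Or.inl ⟨by rw [hT, Finset.mem_union]; exact Or.inl ((hA i).2 (Or.inl ⟨hiS, h⟩)), h⟩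
    · exact absurd hiS hm
    · rcases Nat.lt_trichotomy i (j + 1) with h' | rfl | h'
      · omega
      · exact Or.inr (Or.inl rfl)
      · have h3 : j + 3 ≤ i := by
          rcases Nat.lt_or_ge (j + 2) i with h'' | h''
          · omega
          · have : i = j + 2 := by omega
            exact absurd (this ▸ hiS) hpp
        refine Or.inr (Or.inr ⟨h3, ?_⟩)
        rw [hT, Finset.mem_union]
        left
        exact (hA _).2 (Or.inr ⟨by rwa [Nat.sub_add_cancel (by omega)], by omega⟩)

lemma crux (hp : j + 1 ∈ S) (hm : j ∉ S) (hpp : j + 2 ∉ S) :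
    (∀ i, ((i ∈ T ∧ i < j) ∨ i = j + 1 ∨ (j + 3 ≤ i ∧ i - 1 ∈ T)) ↔ i ∈ S) ↔
      (T = Shat S (j + 1) ∨ T = Shat S (j + 1) ∪ {j} ∨ T = Shat S (j + 1) ∪ {j + 1} ∨
        T = Shat S (j + 1) ∪ {j, j + 1}) := by
  have hA := memA (S := S) hm hpp
  constructor
  · intro H
    have hchar : ∀ i, i ∈ T ↔ i ∈ Shat S (j + 1) ∨ (i ∈ T ∧ (i = j ∨ i = j + 1)) := by
      intro i
      constructor
      · intro hiT
        by_cases h1 : i < j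
        · exact Or.inl ((hA i).2 (Or.inl ⟨(H i).1 (Or.inl ⟨hiT, h1⟩), h1⟩))
        · by_cases h2 : i = j ∨ i = j + 1
          · exact Or.inr ⟨hiT, h2⟩
          · have hge : j + 2 ≤ i := by omega
            have : i + 1 ∈ S := (H (i + 1)).1 (Or.inr (Or.inr ⟨by omega, by
              rwa [Nat.add_sub_cancel]⟩))
            exact Or.inl ((hA i).2 (Or.inr ⟨this, hge⟩))
      · rintro (hiA | ⟨hiT, _⟩)
        · rcases (hA i).1 hiA with ⟨hiS, hij⟩ | ⟨hiS, hij⟩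
          · rcases (H i).2 hiS with ⟨h, _⟩ | h | ⟨h, _⟩
            · exact h
            · omega
            · omega
          · rcases (H (i + 1)).2 hiS with ⟨_, h⟩ | h | ⟨_, h⟩
            · omega
            · omega
            · rwa [Nat.add_sub_cancel] at h
        · exact hiT
    by_cases hjT : j ∈ T <;> by_cases hj1T : j + 1 ∈ T
    · refine Or.inr (Or.inr (Or.inr ?_))
      ext i
      rw [Finset.mem_union, Finset.mem_insert, Finset.mem_singleton]
      constructor
      · intro h
        rcases (hchar i).1 h with h' | ⟨_, h'⟩
        · exact Or.inl h'
        · exact Or.inr h'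
      · rintro (h | rfl | rfl)
        · exact (hchar i).2 (Or.inl h)
        · exact hjT
        · exact hj1T
    · refine Or.inr (Or.inl ?_)
      ext i
      rw [Finset.mem_union, Finset.mem_singleton]
      constructor
      · intro h
        rcases (hchar i).1 h with h' | ⟨hiT, rfl | rfl⟩
        · exact Or.inl h'
        · exact Or.inr rfl
        · exact absurd hiT hj1T
      · rintro (h | rfl)
        · exact (hchar i).2 (Or.inl h)
        · exact hjT
    · refine Or.inr (Or.inr (Or.inl ?_))
      ext i
      rw [Finset.mem_union, Finset.mem_singleton]
      constructor
      · intro h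
        rcases (hchar i).1 h with h' | ⟨hiT, rfl | rfl⟩
        · exact Or.inl h'
        · exact absurd hiT hjT
        · exact Or.inr rfl
      · rintro (h | rfl)
        · exact (hchar i).2 (Or.inl h)
        · exact hj1T
    · refine Or.inl ?_
      ext i
      constructor
      · intro h
        rcases (hchar i).1 h with h' | ⟨hiT, rfl | rfl⟩
        · exact h'
        · exact absurd hiT hjT
        · exact absurd hiT hj1T
      · intro h
        exact (hchar i).2 (Or.inl h)
  · rintro (hT | hT | hT | hT)
    · exact crux_back hp hm hpp (B := ∅) (by simp) (by simp [hT])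
    · exact crux_back hp hm hpp (B := {j}) (by simp) hT
    · exact crux_back hp hm hpp (B := {j+1}) (by simp) hT
    · exact crux_back hp hm hpp (B := {j, j+1}) (by intro b hb; simpa using hb) hT

lemma j_not_memA (hm : j ∉ S) (hpp : j + 2 ∉ S) : j ∉ Shat S (j + 1) := by
  intro h
  rcases (memA hm hpp j).1 h with ⟨_, h2⟩ | ⟨_, h2⟩ <;> omega

lemma j1_not_memA (hm : j ∉ S) (hpp : j + 2 ∉ S) : j + 1 ∉ Shat S (j + 1) := by
  intro h
  rcases (memA hm hpp (j+1)).1 h with ⟨_, h2⟩ | ⟨h1, h2⟩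
  · omega
  · have : j + 1 + 1 = j + 2 := by omega
    exact hpp (this ▸ h1)

lemma id1 (hp : j + 1 ∈ S) (hm : j ∉ S) (hpp : j + 2 ∉ S) :
    Shat S (j + 1) ∪ {j} = Sdown S (j + 1) := by
  ext i
  rw [Finset.mem_union, Finset.mem_singleton, memA hm hpp, mem_Sdown]
  constructor
  · rintro ((⟨h1, h2⟩ | ⟨h1, h2⟩) | rfl)
    · exact Or.inl ⟨h1, by omega⟩
    · exact Or.inr ⟨i + 1, h1, by omega, by omega⟩
    · exact Or.inr ⟨i + 1, hp, by omega, by omega⟩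
  · rintro (⟨h1, h2⟩ | ⟨s, hs, h1, rfl⟩)
    · rcases Nat.lt_or_ge i j with h | h
      · exact Or.inl (Or.inl ⟨h1, h⟩)
      · have : i = j := by omega
        exact absurd h1 (by rw [this]; exact hm)
    · rcases Nat.lt_or_ge (j + 1) s with h | h
      · have hs3 : j + 3 ≤ s := by
          rcases Nat.lt_or_ge (j + 2) s with h' | h'
          · omega
          · have : s = j + 2 := by omega
            exact absurd (this ▸ hs) hpp
        exact Or.inl (Or.inr ⟨by rwa [Nat.sub_add_cancel (by omega)], by omega⟩)
      · have : s = j + 1 := by omega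
        exact Or.inr (by omega)

lemma id2max {p : ℕ} (hp : p ∈ S) (hmax : ∀ s ∈ S, s ≤ p) :
    Shat S p ∪ {p} = S := by
  ext i
  rw [Finset.mem_union, Finset.mem_singleton, mem_Shat]
  constructor
  · rintro ((⟨h1, _⟩ | ⟨s, hs, h1, rfl⟩) | rfl)
    · exact h1
    · exact absurd (hmax s hs) (by omega)
    · exact hp
  · intro h
    rcases Nat.lt_or_ge i p with h' | h'
    · exact Or.inl (Or.inl ⟨h, h'⟩)
    · exact Or.inr (by have := hmax i h; omega)

lemma id2mid (hp : j + 1 ∈ S) (hm : j ∉ S) (hpp : j + 2 ∉ S) {p' : ℕ} (hp'S : p' ∈ S)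
    (hgt : j + 1 < p') (hmin : ∀ x ∈ S, j + 1 < x → p' ≤ x) :
    Shat S (j + 1) ∪ {j + 1} = Sdown S p' := by
  ext i
  rw [Finset.mem_union, Finset.mem_singleton, memA hm hpp, mem_Sdown]
  constructor
  · rintro ((⟨h1, h2⟩ | ⟨h1, h2⟩) | rfl)
    · exact Or.inl ⟨h1, by omega⟩
    · exact Or.inr ⟨i + 1, h1, hmin _ h1 (by omega), by omega⟩
    · exact Or.inl ⟨hp, hgt⟩
  · rintro (⟨h1, h2⟩ | ⟨s, hs, h1, rfl⟩)
    · rcases Nat.lt_trichotomy i (j + 1) with h | rfl | h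
      · rcases Nat.lt_or_ge i j with h' | h'
        · exact Or.inl (Or.inl ⟨h1, h'⟩)
        · have : i = j := by omega
          exact absurd h1 (by rw [this]; exact hm)
      · exact Or.inr rfl
      · exact absurd (hmin _ h1 h) (by omega)
    · have hs' : j + 1 < s := by omega
      have hs3 : j + 3 ≤ s := by
        rcases Nat.lt_or_ge (j + 2) s with h' | h'
        · omega
        · have : s = j + 2 := by omega
          exact absurd (this ▸ hs) hpp
      exact Or.inl (Or.inr ⟨by rwa [Nat.sub_add_cancel (by omega)], by omega⟩)

end FinsetLemmas

theorem stmt_8 (n : ℕ) (S : Finset ℕ) (hS : S.Nonempty) (hadm : Admissible (n + 1) S)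
    (q : ℕ) (hq : S.max' hS ≤ q) :
    numPerms (q + 1) S =
      2 * numPerms q S + 2 * ∑ i ∈ S, numPerms q (Sdown S i)
        + ∑ i ∈ S, numPerms q (Shat S i) := by
  classical
  obtain ⟨l0, hl0p, hl0S⟩ := hadm
  have hS2 : ∀ s ∈ S, 2 ≤ s := fun s hs => (mem_peaks.1 (by rw [hl0S]; exact hs)).1
  have hadj : ∀ x, x ∈ S → x + 1 ∈ S → False := fun x hx hx1 =>
    peaks_not_adjacent (l := l0) (by rw [hl0S]; exact hx) (by rw [hl0S]; exact hx1)
  have hmaxq : ∀ s ∈ S, s ≤ q := fun s hs => le_trans (Finset.le_max' S s hs) hq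
  have hq2 : 2 ≤ q := le_trans (hS2 _ (S.max'_mem hS)) (hmaxq _ (S.max'_mem hS))
  -- basic facts about elements of permsF q
  have hfacts : ∀ τ ∈ permsF q, τ.length = q ∧ (∀ x ∈ τ, x < q + 1) := by
    intro τ hτ
    exact ⟨length_of_permsF hτ, fun x hx => by have := mem_of_permsF hτ hx; omega⟩
  have hpkb : ∀ τ ∈ permsF q, ∀ t ∈ peaks τ, 2 ≤ t ∧ t + 1 ≤ q := by
    intro τ hτ t ht
    have h1 := mem_peaks.1 ht
    rw [(hfacts τ hτ).1] at h1
    omega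
  -- the three per-fiber values
  have Nb0 : ((permsF q).filter (fun τ => peaks (τ.insertIdx 0 (q + 1)) = S)).card
      = numPerms q (Sdown S (S.min' hS)) := by
    have him : Sdown S (S.min' hS) = S.image (· - 1) := by
      ext i
      rw [mem_Sdown, Finset.mem_image]
      constructor
      · rintro (⟨h1, h2⟩ | ⟨s, hs, _, h⟩)
        · exact absurd (S.min'_le i h1) (by omega)
        · exact ⟨s, hs, h⟩
      · rintro ⟨s, hs, h⟩
        exact Or.inr ⟨s, hs, S.min'_le s hs, h⟩
    rw [numPerms_eq, him]
    apply congrArg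
    apply Finset.filter_congr
    intro τ hτ
    obtain ⟨hlen, hb⟩ := hfacts τ hτ
    have hkey : ∀ i, i ∈ peaks (τ.insertIdx 0 (q + 1)) ↔ (3 ≤ i ∧ i - 1 ∈ peaks τ) := by
      intro i
      rw [mem_peaks_insertIdx hlen hb (by omega)]
      constructor
      · rintro (⟨_, h⟩ | ⟨h, _⟩ | ⟨h1, h2⟩)
        · omega
        · omega
        · exact ⟨by omega, h2⟩
      · rintro ⟨h1, h2⟩
        exact Or.inr (Or.inr ⟨by omega, h2⟩)
    constructor
    · intro h
      have H : ∀ i, (3 ≤ i ∧ i - 1 ∈ peaks τ) ↔ i ∈ S := by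
        intro i
        rw [← hkey i, h]
      ext t
      rw [Finset.mem_image]
      constructor
      · intro ht
        have h2 : 2 ≤ t := (hpkb τ hτ t ht).1
        have : t + 1 ∈ S := (H (t + 1)).1 ⟨by omega, by rwa [Nat.add_sub_cancel]⟩
        exact ⟨t + 1, this, by omega⟩
      · rintro ⟨s, hs, rfl⟩
        exact ((H s).2 hs).2
    · intro h
      ext i
      rw [hkey i]
      constructor
      · rintro ⟨h3, hm'⟩
        rw [h, Finset.mem_image] at hm'
        obtain ⟨s, hs, hse⟩ := hm'
        have : s = i := by have := hS2 s hs; omega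
        exact this ▸ hs
      · intro hiS
        have h3 : 3 ≤ i := by
          rcases Nat.lt_or_ge i 3 with h' | h'
          · have hi2 : i = 2 := by have := hS2 i hiS; omega
            have : (1 : ℕ) ∈ peaks τ := by
              rw [h, Finset.mem_image]
              exact ⟨i, hiS, by omega⟩
            exact absurd (mem_peaks.1 this).1 (by omega)
          · exact h'
        refine ⟨h3, ?_⟩
        rw [h, Finset.mem_image]
        exact ⟨i, hiS, rfl⟩
  have Nbq : ((permsF q).filter (fun τ => peaks (τ.insertIdx q (q + 1)) = S)).card
      = numPerms q S := by
    rw [numPerms_eq]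
    apply congrArg
    apply Finset.filter_congr
    intro τ hτ
    obtain ⟨hlen, hb⟩ := hfacts τ hτ
    have hkey : ∀ i, i ∈ peaks (τ.insertIdx q (q + 1)) ↔ i ∈ peaks τ := by
      intro i
      rw [mem_peaks_insertIdx hlen hb (le_refl q)]
      constructor
      · rintro (⟨h, _⟩ | ⟨_, h, _⟩ | ⟨h1, h2⟩)
        · exact h
        · omega
        · have := (hpkb τ hτ _ h2).2
          omega
      · intro h
        have := (hpkb τ hτ _ h).2
        have h2 := (hpkb τ hτ _ h).1
        exact Or.inl ⟨h, by omega⟩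
    constructor
    · intro h
      ext i
      rw [← hkey i, h]
    · intro h
      ext i
      rw [hkey i, h]
  -- middle values
  set f : ℕ → ℕ := fun p => numPerms q (Shat S p) + numPerms q (Sdown S p) +
    numPerms q (Shat S p ∪ {p}) with hf
  have Nbmid : ∀ j ∈ Finset.Icc 1 (q - 1),
      ((permsF q).filter (fun τ => peaks (τ.insertIdx j (q + 1)) = S)).card
        = if j + 1 ∈ S then f (j + 1) else 0 := by
    intro j hj
    rw [Finset.mem_Icc] at hj
    obtain ⟨hj1, hjq'⟩ := hj
    have hjq : j + 1 ≤ q := by omega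
    by_cases hjS : j + 1 ∈ S
    · rw [if_pos hjS]
      have hm : j ∉ S := fun h => hadj j h hjS
      have hpp : j + 2 ∉ S := fun h => hadj (j+1) hjS h
      have hfc : ∀ τ ∈ permsF q, (peaks (τ.insertIdx j (q+1)) = S ↔
          (peaks τ = Shat S (j+1) ∨ peaks τ = Shat S (j+1) ∪ {j} ∨
            peaks τ = Shat S (j+1) ∪ {j+1} ∨ peaks τ = Shat S (j+1) ∪ {j, j+1})) := by
        intro τ hτ
        obtain ⟨hlen, hb⟩ := hfacts τ hτ
        have hD : ∀ i, i ∈ peaks (τ.insertIdx j (q+1)) ↔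
            ((i ∈ peaks τ ∧ i < j) ∨ i = j + 1 ∨ (j + 3 ≤ i ∧ i - 1 ∈ peaks τ)) := by
          intro i
          rw [mem_peaks_insertIdx hlen hb (by omega)]
          constructor
          · rintro (h | ⟨_, _, h⟩ | h)
            · exact Or.inl h
            · exact Or.inr (Or.inl h)
            · exact Or.inr (Or.inr h)
          · rintro (h | rfl | h)
            · exact Or.inl h
            · exact Or.inr (Or.inl ⟨hj1, hjq, rfl⟩)
            · exact Or.inr (Or.inr h)
        calc peaks (τ.insertIdx j (q+1)) = S
            ↔ (∀ i, i ∈ peaks (τ.insertIdx j (q+1)) ↔ i ∈ S) := Finset.ext_iff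
          _ ↔ (∀ i, ((i ∈ peaks τ ∧ i < j) ∨ i = j + 1 ∨ (j + 3 ≤ i ∧ i - 1 ∈ peaks τ))
                ↔ i ∈ S) := forall_congr' (fun i => iff_congr (hD i) Iff.rfl)
          _ ↔ _ := crux hjS hm hpp
      rw [Finset.filter_congr hfc]
      have hdisj : ∀ (X Y : Finset ℕ), X ≠ Y →
          Disjoint ((permsF q).filter (fun τ => peaks τ = X))
            ((permsF q).filter (fun τ => peaks τ = Y)) := by
        intro X Y hXY
        rw [Finset.disjoint_left]
        intro a h1 h2
        exact hXY (by rw [← (Finset.mem_filter.1 h1).2, ← (Finset.mem_filter.1 h2).2])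
      have hjA := j_not_memA (S := S) hm hpp
      have hj1A := j1_not_memA (S := S) hm hpp
      have ne12 : Shat S (j+1) ≠ Shat S (j+1) ∪ {j} := fun h =>
        hjA (h ▸ Finset.mem_union_right _ (Finset.mem_singleton_self j))
      have ne13 : Shat S (j+1) ≠ Shat S (j+1) ∪ {j+1} := fun h =>
        hj1A (h ▸ Finset.mem_union_right _ (Finset.mem_singleton_self (j+1)))
      have ne14 : Shat S (j+1) ≠ Shat S (j+1) ∪ {j, j+1} := fun h =>
        hjA (h ▸ Finset.mem_union_right _ (Finset.mem_insert_self j {j+1}))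
      have ne23 : Shat S (j+1) ∪ {j} ≠ Shat S (j+1) ∪ {j+1} := fun h => by
        have : j ∈ Shat S (j+1) ∪ {j+1} :=
          h ▸ Finset.mem_union_right _ (Finset.mem_singleton_self j)
        rcases Finset.mem_union.1 this with h' | h'
        · exact hjA h'
        · rw [Finset.mem_singleton] at h'; omega
      have ne24 : Shat S (j+1) ∪ {j} ≠ Shat S (j+1) ∪ {j, j+1} := fun h => by
        have : j + 1 ∈ Shat S (j+1) ∪ {j} :=
          h ▸ Finset.mem_union_right _ (Finset.mem_insert_of_mem (Finset.mem_singleton_self (j+1)))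
        rcases Finset.mem_union.1 this with h' | h'
        · exact hj1A h'
        · rw [Finset.mem_singleton] at h'; omega
      have ne34 : Shat S (j+1) ∪ {j+1} ≠ Shat S (j+1) ∪ {j, j+1} := fun h => by
        have : j ∈ Shat S (j+1) ∪ {j+1} :=
          h ▸ Finset.mem_union_right _ (Finset.mem_insert_self j {j+1})
        rcases Finset.mem_union.1 this with h' | h'
        · exact hjA h'
        · rw [Finset.mem_singleton] at h'; omega
      rw [Finset.filter_or, Finset.filter_or, Finset.filter_or]
      rw [Finset.card_union_of_disjoint, Finset.card_union_of_disjoint,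
        Finset.card_union_of_disjoint]
      · have c4 : ((permsF q).filter (fun τ => peaks τ = Shat S (j+1) ∪ {j, j+1})).card
            = 0 := by
          rw [← numPerms_eq]
          exact numPerms_adj_zero q
            (Finset.mem_union_right _ (Finset.mem_insert_self j {j+1}))
            (Finset.mem_union_right _ (Finset.mem_insert_of_mem (Finset.mem_singleton_self (j+1))))
        rw [c4, ← numPerms_eq, ← numPerms_eq, ← numPerms_eq]
        rw [hf]
        simp only []
        rw [id1 hjS hm hpp]
        omega
      · exact hdisj _ _ ne34
      · rw [Finset.disjoint_left]
        intro a h1 h2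
        have e1 := (Finset.mem_filter.1 h1).2
        rcases Finset.mem_union.1 h2 with h' | h'
        · exact ne23 (e1.symm.trans (Finset.mem_filter.1 h').2)
        · exact ne24 (e1.symm.trans (Finset.mem_filter.1 h').2)
      · rw [Finset.disjoint_left]
        intro a h1 h2
        have e1 := (Finset.mem_filter.1 h1).2
        rcases Finset.mem_union.1 h2 with h' | h'
        · exact ne12 (e1.symm.trans (Finset.mem_filter.1 h').2)
        · rcases Finset.mem_union.1 h' with h'' | h''
          · exact ne13 (e1.symm.trans (Finset.mem_filter.1 h'').2)
          · exact ne14 (e1.symm.trans (Finset.mem_filter.1 h'').2)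
    · rw [if_neg hjS]
      rw [Finset.card_eq_zero, Finset.filter_eq_empty_iff]
      intro τ hτ
      obtain ⟨hlen, hb⟩ := hfacts τ hτ
      intro heq
      apply hjS
      rw [← heq]
      rw [mem_peaks_insertIdx hlen hb (by omega)]
      exact Or.inr (Or.inl ⟨hj1, hjq, rfl⟩)
  -- assemble
  rw [card_step q S]
  have hrange : Finset.range (q + 1) = insert 0 (insert q (Finset.Icc 1 (q - 1))) := by
    ext i
    simp only [Finset.mem_range, Finset.mem_insert, Finset.mem_Icc]
    omega
  rw [hrange, Finset.sum_insert (by simp; omega), Finset.sum_insert (by simp; omega)]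
  rw [Nb0, Nbq, Finset.sum_congr rfl Nbmid]
  -- reindex the middle sum over S
  have hreidx : ∑ j ∈ Finset.Icc 1 (q - 1), (if j + 1 ∈ S then f (j + 1) else 0)
      = ∑ p ∈ S, f p := by
    rw [← Finset.sum_filter]
    refine Finset.sum_bij (fun j _ => j + 1) ?_ ?_ ?_ ?_
    · intro a ha
      exact (Finset.mem_filter.1 ha).2
    · intro a _ b _ h
      have h' : a + 1 = b + 1 := h
      omega
    · intro p hp
      refine ⟨p - 1, Finset.mem_filter.2 ⟨Finset.mem_Icc.2 ⟨by have := hS2 p hp; omega,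
        by have := hmaxq p hp; omega⟩, by rwa [Nat.sub_add_cancel (by have := hS2 p hp; omega)]⟩,
        show p - 1 + 1 = p by have := hS2 p hp; omega⟩
    · intro a _
      rfl
  rw [hreidx]
  -- split f into three sums
  have hsplit : ∑ p ∈ S, f p = (∑ p ∈ S, numPerms q (Shat S p)) +
      (∑ p ∈ S, numPerms q (Sdown S p)) + (∑ p ∈ S, numPerms q (Shat S p ∪ {p})) := by
    rw [hf]
    rw [← Finset.sum_add_distrib, ← Finset.sum_add_distrib]
  rw [hsplit]
  -- the third sum
  set mx := S.max' hS with hmx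
  set mn := S.min' hS with hmn
  have hnxt_spec : ∀ p ∈ S.erase mx, (sInf {x : ℕ | x ∈ S ∧ p < x} ∈ S ∧
      p < sInf {x : ℕ | x ∈ S ∧ p < x} ∧
      ∀ x ∈ S, p < x → sInf {x : ℕ | x ∈ S ∧ p < x} ≤ x) := by
    intro p hp
    have hpS := Finset.mem_of_mem_erase hp
    have hne : {x : ℕ | x ∈ S ∧ p < x}.Nonempty :=
      ⟨mx, S.max'_mem hS, lt_of_le_of_ne (Finset.le_max' S p hpS) (Finset.ne_of_mem_erase hp)⟩
    have h1 := Nat.sInf_mem hne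
    exact ⟨h1.1, h1.2, fun x hx hpx => Nat.sInf_le ⟨hx, hpx⟩⟩
  have hthird : ∑ p ∈ S, numPerms q (Shat S p ∪ {p})
      = numPerms q S + ∑ p ∈ S.erase mn, numPerms q (Sdown S p) := by
    rw [← Finset.add_sum_erase S _ (S.max'_mem hS)]
    congr 1
    · exact congrArg (numPerms q) (id2max (S.max'_mem hS) (fun s hs => Finset.le_max' S s hs))
    · refine Finset.sum_bij (fun p _ => sInf {x : ℕ | x ∈ S ∧ p < x}) ?_ ?_ ?_ ?_
      · intro p hp
        obtain ⟨hmem, hlt, _⟩ := hnxt_spec p hp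
        show sInf {x : ℕ | x ∈ S ∧ p < x} ∈ S.erase mn
        refine Finset.mem_erase.2 ⟨?_, hmem⟩
        have : mn ≤ p := Finset.min'_le S p (Finset.mem_of_mem_erase hp)
        omega
      · intro a ha b hb h
        have h' : sInf {x : ℕ | x ∈ S ∧ a < x} = sInf {x : ℕ | x ∈ S ∧ b < x} := h
        by_contra hne
        obtain ⟨haS, halt, hale⟩ := hnxt_spec a ha
        obtain ⟨hbS, hblt, hble⟩ := hnxt_spec b hb
        rcases Nat.lt_or_ge a b with hab | hab
        · have h1 := hale b (Finset.mem_of_mem_erase hb) hab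
          omega
        · have hab' : b < a := by omega
          have h1 := hble a (Finset.mem_of_mem_erase ha) hab'
          omega
      · intro p' hp'
        have hp'S := Finset.mem_of_mem_erase hp'
        have hmnlt : mn < p' := lt_of_le_of_ne (Finset.min'_le S p' hp'S)
          (fun h => (Finset.ne_of_mem_erase hp') h.symm)
        have hbne : (S.filter (fun x => x < p')).Nonempty :=
          ⟨mn, Finset.mem_filter.2 ⟨S.min'_mem hS, hmnlt⟩⟩
        set b := (S.filter (fun x => x < p')).max' hbne with hb
        have hbmem := Finset.max'_mem _ hbne
        rw [Finset.mem_filter] at hbmem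
        have hbS : b ∈ S := hbmem.1
        have hblt : b < p' := hbmem.2
        have hbmax : ∀ x ∈ S, x < p' → x ≤ b := by
          intro x hx hxp
          have h6 := Finset.le_max' (S.filter (fun x => x < p')) x
            (Finset.mem_filter.2 ⟨hx, hxp⟩)
          rw [← hb] at h6
          exact h6
        have hbe : b ∈ S.erase mx := by
          refine Finset.mem_erase.2 ⟨?_, hbS⟩
          intro h
          have h5 : p' ≤ mx := Finset.le_max' S p' hp'S
          omega
        obtain ⟨hnS, hnlt, hnle⟩ := hnxt_spec b hbe
        refine ⟨b, hbe, ?_⟩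
        show sInf {x : ℕ | x ∈ S ∧ b < x} = p'
        have h2 : sInf {x : ℕ | x ∈ S ∧ b < x} ≤ p' := hnle p' hp'S hblt
        have h4 : ¬ (sInf {x : ℕ | x ∈ S ∧ b < x} < p') := by
          intro hlt
          have := hbmax _ hnS hlt
          omega
        omega
      · intro p hp
        have hpS := Finset.mem_of_mem_erase hp
        have h2p : 2 ≤ p := hS2 p hpS
        obtain ⟨hnS, hnlt, hnle⟩ := hnxt_spec p hp
        obtain ⟨j, rfl⟩ : ∃ j, p = j + 1 := ⟨p - 1, by omega⟩
        have hm : j ∉ S := fun h => hadj j h hpS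
        have hpp : j + 2 ∉ S := fun h => hadj (j + 1) hpS h
        exact congrArg (numPerms q) (id2mid hpS hm hpp hnS hnlt hnle)
  rw [hthird]
  have hsecond : ∑ p ∈ S, numPerms q (Sdown S p)
      = numPerms q (Sdown S mn) + ∑ p ∈ S.erase mn, numPerms q (Sdown S p) :=
    (Finset.add_sum_erase S _ (S.min'_mem hS)).symm
  omega
end

section
/- Let π be a permutation of {1,...,q} with peak set exactly S, and let i_s = max(S). Then the permutation of {1,...,q+1} obtained by inserting the value q+1 into position i_s (shifting π_{i_s},...,π_q one position to the right) has peak set exactly S. -/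
lemma getD_insertIdx_aux (l : List ℕ) (x : ℕ) (n : ℕ) (hn : n ≤ l.length) (k : ℕ) :
    (l.insertIdx n x).getD k 0 =
      if k < n then l.getD k 0 else if k = n then x else l.getD (k - 1) 0 := by
  have hlen : (l.insertIdx n x).length = l.length + 1 := List.length_insertIdx_of_le_length hn x
  rcases lt_trichotomy k n with h | h | h
  · rw [if_pos h]
    rcases lt_or_ge k l.length with hk | hk
    · rw [List.getD_eq_getElem _ _ (by omega), List.getD_eq_getElem _ _ hk,
        List.getElem_insertIdx_of_lt h (by omega)]
    · omega
  · subst h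
    rw [if_neg (lt_irrefl k), if_pos rfl, List.getD_eq_getElem _ _ (by omega),
      List.getElem_insertIdx_self (by omega)]
  · rw [if_neg (by omega), if_neg (by omega)]
    rcases lt_or_ge k (l.length + 1) with hk | hk
    · rw [List.getD_eq_getElem _ _ (by omega), List.getD_eq_getElem _ _ (by omega)]
      obtain ⟨j, rfl⟩ : ∃ j, k = n + j + 1 := ⟨k - n - 1, by omega⟩
      rw [List.getElem_insertIdx_add_succ l x n j (by omega)]
      congr 1
    · rw [List.getD_eq_default _ _ (by omega), List.getD_eq_default _ _ (by omega)]

theorem stmt_10 (q : ℕ) (l : List ℕ) (hl : IsPermOf q l) (S : Finset ℕ) (hS : S.Nonempty)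
    (hpk : peaks l = S) :
    peaks (l.insertIdx (S.max' hS - 1) (q + 1)) = S := by
  set m := S.max' hS with hm
  have hlen : l.length = q := by
    have := hl.length_eq
    simpa using this
  have hbound : ∀ k, l.getD k 0 ≤ q := by
    intro k
    rcases lt_or_ge k l.length with hk | hk
    · rw [List.getD_eq_getElem _ _ hk]
      have h1 : l[k] ∈ l := List.getElem_mem hk
      have h2 := hl.mem_iff.mp h1
      rw [List.mem_range'] at h2
      omega
    · rw [List.getD_eq_default _ _ hk]; omega
  have hmS : m ∈ S := S.max'_mem hS
  have hmax : ∀ j ∈ S, j ≤ m := fun j hj => S.le_max' j hj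
  have hmpk : m ∈ peaks l := hpk ▸ hmS
  rw [peaks, Finset.mem_filter, Finset.mem_Icc] at hmpk
  obtain ⟨⟨hm2, hmq⟩, hc1, hc2⟩ := hmpk
  rw [hlen] at hmq
  have hq : 3 ≤ q := by omega
  have hnle : m - 1 ≤ l.length := by omega
  have hLlen : (l.insertIdx (m - 1) (q + 1)).length = q + 1 := by
    rw [List.length_insertIdx_of_le_length hnle, hlen]
  have hiS : ∀ j, j ∈ S ↔ (2 ≤ j ∧ j ≤ q - 1 ∧ l.getD (j-2) 0 < l.getD (j-1) 0 ∧
      l.getD j 0 < l.getD (j-1) 0) := by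
    intro j
    rw [← hpk, peaks, Finset.mem_filter, Finset.mem_Icc, hlen]
    tauto
  ext i
  rw [peaks, Finset.mem_filter, Finset.mem_Icc, hLlen]
  rw [getD_insertIdx_aux l (q+1) (m-1) hnle, getD_insertIdx_aux l (q+1) (m-1) hnle,
    getD_insertIdx_aux l (q+1) (m-1) hnle]
  simp only [Nat.add_sub_cancel]
  rcases lt_trichotomy i m with hi | hi | hi
  · rcases Nat.lt_or_ge i (m-1) with hi' | hi'
    · -- i ≤ m - 2 : all three indices < m-1
      rw [if_pos (by omega : i - 2 < m - 1), if_pos (by omega : i - 1 < m - 1),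
        if_pos (by omega : i < m - 1)]
      rw [hiS i]
      constructor
      · rintro ⟨⟨h2, _⟩, ha, hb⟩; exact ⟨h2, by omega, ha, hb⟩
      · rintro ⟨h2, h3, ha, hb⟩; exact ⟨⟨h2, by omega⟩, ha, hb⟩
    · -- i = m - 1
      have hieq : i = m - 1 := by omega
      subst hieq
      rw [if_pos (by omega : m - 1 - 2 < m - 1), if_pos (by omega : m - 1 - 1 < m - 1),
        if_neg (by omega : ¬ m - 1 < m - 1), if_pos (rfl : m - 1 = m - 1)]
      have he : m - 1 - 1 = m - 2 := by omega
      rw [he]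
      constructor
      · rintro ⟨_, _, hb⟩
        exact absurd hb (by have := hbound (m-2); omega)
      · intro hmem
        rw [hiS] at hmem
        obtain ⟨_, _, _, hb⟩ := hmem
        rw [he] at hb
        omega
  · -- i = m
    subst hi
    rw [if_pos (by omega : m - 2 < m - 1), if_neg (by omega : ¬ m - 1 < m - 1),
      if_pos (rfl : m - 1 = m - 1), if_neg (by omega : ¬ m < m - 1),
      if_neg (by omega : ¬ m = m - 1)]
    constructor
    · intro _; exact hmS
    · intro _
      exact ⟨⟨hm2, by omega⟩, by have := hbound (m-2); omega, by have := hbound (m-1); omega⟩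
  · rcases Nat.lt_or_ge i (m+2) with hi' | hi'
    · -- i = m + 1
      have hieq : i = m + 1 := by omega
      subst hieq
      rw [if_neg (by omega : ¬ m + 1 - 2 < m - 1), if_pos (by omega : m + 1 - 2 = m - 1),
        if_neg (by omega : ¬ m + 1 - 1 < m - 1), if_neg (by omega : ¬ m + 1 - 1 = m - 1)]
      constructor
      · rintro ⟨_, ha, _⟩
        exact absurd ha (by have := hbound (m + 1 - 1 - 1); omega)
      · intro hmem
        exact absurd (hmax _ hmem) (by omega)
    · -- i ≥ m + 2
      rw [if_neg (by omega : ¬ i - 2 < m - 1), if_neg (by omega : ¬ i - 2 = m - 1),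
        if_neg (by omega : ¬ i - 1 < m - 1), if_neg (by omega : ¬ i - 1 = m - 1),
        if_neg (by omega : ¬ i < m - 1), if_neg (by omega : ¬ i = m - 1)]
      have e1 : i - 2 - 1 = (i - 1) - 2 := by omega
      have e2 : i - 1 - 1 = (i - 1) - 1 := by omega
      rw [e1, e2]
      constructor
      · rintro ⟨⟨_, hle⟩, ha, hb⟩
        have : i - 1 ∈ S := (hiS (i-1)).mpr ⟨by omega, by omega, ha, hb⟩
        exact absurd (hmax _ this) (by omega)
      · intro hmem
        exact absurd (hmax _ hmem) (by omega)
end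

section
/- Let π be a permutation of {1,...,q} with peak set T, and suppose T contains neither i-1 nor i for some index 2 ≤ i ≤ q. Then the permutation of {1,...,q+1} obtained by inserting the value q+1 into position i has peak set exactly (the set of elements of T less than i) ∪ {i} ∪ (the set of elements t+1 for t ∈ T with t ≥ i). -/
theorem stmt_11 (q : ℕ) (l : List ℕ) (hl : IsPermOf q l) (T : Finset ℕ)
    (hpk : peaks l = T) (i : ℕ) (hi2 : 2 ≤ i) (hiq : i ≤ q)
    (h1 : i - 1 ∉ T) (h2 : i ∉ T) :
    peaks (l.insertIdx (i - 1) (q + 1)) =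
      T.filter (· < i) ∪ {i} ∪ (T.filter (i ≤ ·)).image (· + 1) := by
  have hlen : l.length = q := by simpa using hl.length_eq
  have hub : ∀ j, l.getD j 0 ≤ q := by
    intro j
    by_cases hj : j < l.length
    · rw [List.getD_eq_getElem _ _ hj]
      have : l[j] ∈ l := List.getElem_mem _
      have := (hl.mem_iff).1 this
      rw [List.mem_range'_1] at this
      omega
    · rw [List.getD_eq_default _ _ (by omega)]
      omega
  have hq2 : 2 ≤ q := le_trans hi2 hiq
  have hile : i - 1 ≤ l.length := by omega
  have hlen' : (l.insertIdx (i - 1) (q + 1)).length = q + 1 := by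
    rw [List.length_insertIdx_of_le_length hile, hlen]
  have gA : ∀ j, j < i - 1 → (l.insertIdx (i - 1) (q + 1)).getD j 0 = l.getD j 0 := by
    intro j hj
    have hj2 : j < l.length := by omega
    rw [List.getD_eq_getElem _ _ (by omega : j < (l.insertIdx (i - 1) (q + 1)).length),
      List.getD_eq_getElem _ _ hj2]
    exact List.getElem_insertIdx_of_lt hj _
  have gB : (l.insertIdx (i - 1) (q + 1)).getD (i - 1) 0 = q + 1 := by
    rw [List.getD_eq_getElem _ _ (by omega : i - 1 < (l.insertIdx (i - 1) (q + 1)).length)]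
    exact List.getElem_insertIdx_self _
  have gC : ∀ j, i ≤ j → (l.insertIdx (i - 1) (q + 1)).getD j 0 = l.getD (j - 1) 0 := by
    intro j hj
    by_cases hjq : j - 1 < l.length
    · obtain ⟨k', rfl⟩ : ∃ k', j = i - 1 + k' + 1 := ⟨j - i, by omega⟩
      rw [show (i - 1 + k' + 1) - 1 = i - 1 + k' from by omega]
      rw [List.getD_eq_getElem _ _
          (show i - 1 + k' + 1 < (l.insertIdx (i - 1) (q + 1)).length by omega),
        List.getD_eq_getElem _ _ (show i - 1 + k' < l.length by omega)]
      exact List.getElem_insertIdx_add_succ l (q+1) (i-1) k' (by omega) (by omega)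
    · rw [List.getD_eq_default _ _ (by omega : (l.insertIdx (i - 1) (q + 1)).length ≤ j),
        List.getD_eq_default _ _ (by omega : l.length ≤ j - 1)]
  subst hpk
  ext k
  simp only [peaks, Finset.mem_union, Finset.mem_filter, Finset.mem_image,
    Finset.mem_singleton, Finset.mem_Icc, hlen, hlen', Nat.add_sub_cancel]
  constructor
  · rintro ⟨⟨hk2, hkq⟩, c1, c2⟩
    by_cases hA : k ≤ i - 2
    · left; left
      rw [gA (k-2) (by omega), gA (k-1) (by omega)] at c1
      rw [gA k (by omega), gA (k-1) (by omega)] at c2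
      exact ⟨⟨⟨hk2, by omega⟩, c1, c2⟩, by omega⟩
    · by_cases hB : k = i - 1
      · exfalso
        subst hB
        rw [gB, gA (i-1-1) (by omega)] at c2
        have := hub (i-1-1)
        omega
      · by_cases hC : k = i
        · left; right; exact hC
        · by_cases hD : k = i + 1
          · exfalso
            subst hD
            rw [show i + 1 - 2 = i - 1 from by omega,
              show i + 1 - 1 = i from by omega, gB, gC i le_rfl] at c1
            have := hub (i - 1)
            omega
          · right
            have hk3 : i + 2 ≤ k := by omega
            rw [gC (k-2) (by omega), gC (k-1) (by omega)] at c1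
            rw [gC k (by omega), gC (k-1) (by omega)] at c2
            refine ⟨k - 1, ⟨⟨⟨by omega, by omega⟩, ?_, ?_⟩, by omega⟩, by omega⟩
            · rw [show k - 1 - 2 = k - 2 - 1 from by omega,
                show k - 1 - 1 = k - 1 - 1 from rfl]
              exact c1
            · exact c2
  · rintro ((⟨⟨⟨ht2, htq⟩, c1, c2⟩, hti⟩ | hk) | ⟨t, ⟨⟨⟨ht2, htq⟩, c1, c2⟩, hti⟩, rfl⟩)
    · by_cases hk1 : k = i - 1
      · exact absurd (by
          rw [← hk1]
          simp only [peaks, Finset.mem_filter, Finset.mem_Icc, hlen]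
          exact ⟨⟨ht2, htq⟩, c1, c2⟩) h1
      · refine ⟨⟨ht2, by omega⟩, ?_, ?_⟩
        · rw [gA (k-2) (by omega), gA (k-1) (by omega)]; exact c1
        · rw [gA k (by omega), gA (k-1) (by omega)]; exact c2
    · subst hk
      refine ⟨⟨hi2, by omega⟩, ?_, ?_⟩
      · rw [gA (k-2) (by omega), show k - 1 = k - 1 from rfl, gB]
        have := hub (k - 2); omega
      · rw [show k - 1 = k - 1 from rfl, gB, gC k le_rfl]
        have := hub (k - 1); omega
    · have hti' : i + 1 ≤ t := by
        rcases Nat.lt_or_ge i t with h | h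
        · omega
        · exact absurd (by
            rw [show i = t from by omega]
            simp only [peaks, Finset.mem_filter, Finset.mem_Icc, hlen]
            exact ⟨⟨ht2, htq⟩, c1, c2⟩) h2
      refine ⟨⟨by omega, by omega⟩, ?_, ?_⟩
      · rw [show t + 1 - 2 = t - 1 from by omega, show t + 1 - 1 = t from by omega,
          gC (t-1) (by omega), gC t (by omega), show t - 1 - 1 = t - 2 from by omega]
        exact c1
      · rw [show t + 1 - 1 = t from by omega, gC (t+1) (by omega), gC t (by omega),
          Nat.add_sub_cancel]
        exact c2
end

section
/- For all n ≥ 4 and p_{{2}}(x) = x − 2: the numbers a(n) = |P_{{2}}(n)| satisfy the recurrence a(n+1) = 2·a(n) + 2^{n-1}, with a(3) = 2. -/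
namespace Stmt17

def NoPk (v : List ℕ) : Prop :=
  ∀ j, j + 2 < v.length →
    ¬ (v.getD j 0 < v.getD (j+1) 0 ∧ v.getD (j+2) 0 < v.getD (j+1) 0)

lemma nopk_tail {a : ℕ} {v : List ℕ} (h : NoPk (a :: v)) : NoPk v := by
  intro j hj hc
  exact h (j+1) (by simp; omega) (by simpa using hc)

lemma nopk_cons {x : ℕ} {w : List ℕ}
    (h0 : 2 < (x :: w).length → ¬ (x < w.getD 0 0 ∧ w.getD 1 0 < w.getD 0 0))
    (h : NoPk w) : NoPk (x :: w) := by
  intro j hj hc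
  cases j with
  | zero => exact h0 hj (by simpa using hc)
  | succ j => exact h j (by simp at hj; omega) (by simpa using hc)

lemma chain'_getD {R : ℕ → ℕ → Prop} {u : List ℕ} (h : List.Chain' R u) {j : ℕ}
    (hj : j + 1 < u.length) : R (u.getD j 0) (u.getD (j+1) 0) := by
  rw [List.getD_eq_getElem _ _ (by omega), List.getD_eq_getElem _ _ hj]
  exact List.isChain_iff_getElem.1 h j (by omega)

lemma nopk_inc {u : List ℕ} (hu : List.Chain' (· < ·) u) : NoPk u := by
  intro j hj hc
  have h1 := chain'_getD hu (j := j) (by omega)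
  have h2 := chain'_getD hu (j := j+1) (by omega)
  have e : u.getD (j+1+1) 0 = u.getD (j+2) 0 := rfl
  omega

lemma peaks_eq_char {a : ℕ} {v : List ℕ} (hv : 2 ≤ v.length) :
    peaks (a :: v) = {2} ↔ a < v.getD 0 0 ∧ v.getD 1 0 < v.getD 0 0 ∧ NoPk v := by
  constructor
  · intro h
    have h2 : (2 : ℕ) ∈ peaks (a :: v) := h ▸ Finset.mem_singleton_self 2
    simp only [peaks, Finset.mem_filter, Finset.mem_Icc] at h2
    refine ⟨by simpa using h2.2.1, by simpa using h2.2.2, ?_⟩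
    intro j hj hc
    have hmem : (j + 3) ∈ peaks (a :: v) := by
      simp only [peaks, Finset.mem_filter, Finset.mem_Icc, List.length_cons]
      have e1 : j + 3 - 2 = j + 1 := by omega
      have e2 : j + 3 - 1 = j + 2 := by omega
      rw [e1, e2]
      exact ⟨⟨by omega, by omega⟩, by simpa using hc.1, by simpa using hc.2⟩
    rw [h] at hmem
    simp at hmem
  · rintro ⟨h1, h2, h3⟩
    ext i
    simp only [peaks, Finset.mem_filter, Finset.mem_Icc, Finset.mem_singleton, List.length_cons]
    constructor
    · rintro ⟨⟨hi2, hin⟩, hp1, hp2⟩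
      by_contra hne
      obtain ⟨j, rfl⟩ : ∃ j, i = j + 3 := ⟨i - 3, by omega⟩
      have e1 : j + 3 - 2 = j + 1 := by omega
      have e2 : j + 3 - 1 = j + 2 := by omega
      rw [e1, e2] at hp1
      rw [e2] at hp2
      exact h3 j (by omega) ⟨by simpa using hp1, by simpa using hp2⟩
    · rintro rfl
      exact ⟨⟨le_refl 2, by omega⟩, by simpa using h1, by simpa using h2⟩


lemma inc_of_nopk : ∀ (w : List ℕ) (x y : ℕ), (x :: y :: w).Nodup → NoPk (x :: y :: w) →
    x < y → List.Chain' (· < ·) (x :: y :: w)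
  | [], x, y, _, _, hxy => by simp [List.Chain', hxy]
  | z :: w, x, y, hnd, hnp, hxy => by
    have h := hnp 0 (by simp)
    simp only [List.getD_cons_zero, List.getD_cons_succ] at h
    have hne : y ≠ z := by simp [List.nodup_cons] at hnd; tauto
    have hyz : y < z := by omega
    have := inc_of_nopk w y z hnd.of_cons (nopk_tail hnp) hyz
    exact List.isChain_cons_cons.2 ⟨hxy, this⟩

def descPre : List ℕ → List ℕ
  | [] => []
  | [x] => [x]
  | x :: y :: t => if y < x then x :: descPre (y :: t) else [x]

lemma descPre_cons (x : ℕ) (t : List ℕ) : ∃ s, descPre (x :: t) = x :: s := by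
  cases t with
  | nil => exact ⟨[], rfl⟩
  | cons y t =>
    by_cases h : y < x
    · exact ⟨descPre (y :: t), by simp [descPre, h]⟩
    · exact ⟨[], by simp [descPre, h]⟩

lemma dec : ∀ (v : List ℕ), v.Nodup → NoPk v →
    ∃ u, v = descPre v ++ u ∧ List.Chain' (· > ·) (descPre v) ∧ List.Chain' (· < ·) u ∧
      ∀ x ∈ (descPre v).getLast?, ∀ y ∈ u.head?, x < y
  | [] => fun _ _ => ⟨[], rfl, by simp [descPre, List.Chain'], by simp [List.Chain'], by simp [descPre]⟩
  | [x] => fun _ _ => ⟨[], rfl, by simp [descPre, List.Chain'], by simp [List.Chain'], by simp [descPre]⟩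
  | x :: y :: t => fun hnd hnp => by
    by_cases h : y < x
    · obtain ⟨u, heq, hd, hu, hj⟩ := dec (y :: t) hnd.of_cons (nopk_tail hnp)
      obtain ⟨s, hs⟩ := descPre_cons y t
      refine ⟨u, ?_, ?_, hu, ?_⟩
      · show x :: y :: t = (if y < x then x :: descPre (y :: t) else [x]) ++ u
        rw [if_pos h, List.cons_append, ← heq]
      · show List.Chain' (· > ·) (if y < x then x :: descPre (y :: t) else [x])
        rw [if_pos h, hs]
        exact List.isChain_cons_cons.2 ⟨h, hs ▸ hd⟩
      · show ∀ z ∈ (if y < x then x :: descPre (y :: t) else [x]).getLast?, _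
        rw [if_pos h, hs, List.getLast?_cons_cons]
        rw [hs] at hj
        exact hj
    · have hxy : x < y := by
        have hne : x ≠ y := by simp [List.nodup_cons] at hnd; tauto
        omega
      have hinc := inc_of_nopk t x y hnd hnp hxy
      refine ⟨y :: t, ?_, ?_, hinc.tail, ?_⟩
      · show x :: y :: t = (if y < x then x :: descPre (y :: t) else [x]) ++ (y :: t)
        rw [if_neg h]; rfl
      · show List.Chain' (· > ·) (if y < x then x :: descPre (y :: t) else [x])
        rw [if_neg h]; simp [List.Chain']
      · show ∀ z ∈ (if y < x then x :: descPre (y :: t) else [x]).getLast?, _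
        rw [if_neg h]
        simpa using hxy

lemma descPre_append : ∀ (d u : List ℕ), d ≠ [] → List.Chain' (· > ·) d →
    (∀ x ∈ d.getLast?, ∀ y ∈ u.head?, x < y) → descPre (d ++ u) = d
  | [], _, h, _, _ => absurd rfl h
  | [x], u, _, _, hj => by
    cases u with
    | nil => rfl
    | cons y u' =>
      have hxy : x < y := hj x (by simp) y (by simp)
      show (if y < x then _ else [x]) = [x]
      rw [if_neg (by omega)]
  | x :: y :: d', u, _, hd, hj => by
    have hxy : x > y := (List.isChain_cons_cons.1 hd).1
    have ih := descPre_append (y :: d') u (by simp) (List.isChain_cons_cons.1 hd).2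
      (by rw [List.getLast?_cons_cons] at hj; exact hj)
    show (if y < x then x :: descPre (y :: (d' ++ u)) else [x]) = x :: y :: d'
    rw [if_pos hxy]
    rw [show y :: (d' ++ u) = (y :: d') ++ u from rfl, ih]

lemma nopk_of : ∀ (d u : List ℕ), List.Chain' (· > ·) d → List.Chain' (· < ·) u →
    (∀ x ∈ d.getLast?, ∀ y ∈ u.head?, x < y) → NoPk (d ++ u)
  | [], u, _, hu, _ => by simpa using nopk_inc hu
  | [x], u, _, hu, hj => by
    apply nopk_cons _ (by simpa using nopk_inc hu)
    intro hlen hc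
    cases u with
    | nil => simp at hlen
    | cons y u' =>
      have hxy : x < y := hj x (by simp) y (by simp)
      have h1 : 1 < (y :: u').length := by simpa using hlen
      have := chain'_getD hu (j := 0) h1
      have hc2 : x < y ∧ u'.getD 0 0 < y := hc
      simp only [List.getD_cons_zero, List.getD_cons_succ] at this
      omega
  | x :: y :: d', u, hd, hu, hj => by
    have hxy := (List.isChain_cons_cons.1 hd).1
    have ih := nopk_of (y :: d') u (List.isChain_cons_cons.1 hd).2 hu
      (by rw [List.getLast?_cons_cons] at hj; exact hj)
    show NoPk (x :: ((y :: d') ++ u))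
    apply nopk_cons _ ih
    intro _ hc
    have : ((y :: d') ++ u).getD 0 0 = y := rfl
    omega

lemma getLast_le_of_chain' {d : List ℕ} (hd : List.Chain' (· > ·) d) (hne : d ≠ [])
    {x : ℕ} (hx : x ∈ d) : d.getLast hne ≤ x := by
  have hp : List.Pairwise (· > ·) d := List.isChain_iff_pairwise.1 hd
  have hsplit := List.dropLast_append_getLast hne
  rw [← hsplit] at hp hx
  rw [List.pairwise_append] at hp
  rcases List.mem_append.1 hx with h | h
  · exact le_of_lt (hp.2.2 x h _ (List.mem_singleton_self _))
  · simp at h; omega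

lemma le_headD_of_chain' {d : List ℕ} (hd : List.Chain' (· > ·) d)
    {x : ℕ} (hx : x ∈ d) : x ≤ d.headD 0 := by
  cases d with
  | nil => simp at hx
  | cons h t =>
    have hp := List.isChain_iff_pairwise.1 hd
    rcases List.mem_cons.1 hx with rfl | hm
    · simp
    · exact le_of_lt (List.pairwise_cons.1 hp |>.1 x hm)

lemma headD_le_of_chain' {u : List ℕ} (hu : List.Chain' (· < ·) u)
    {x : ℕ} (hx : x ∈ u) : u.headD 0 ≤ x := by
  cases u with
  | nil => simp at hx
  | cons h t =>
    have hp := List.isChain_iff_pairwise.1 hu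
    rcases List.mem_cons.1 hx with rfl | hm
    · simp
    · exact le_of_lt (List.pairwise_cons.1 hp |>.1 x hm)


def mval (a : ℕ) : ℕ := if a = 1 then 2 else 1

def Sa (n a : ℕ) : Finset ℕ := Finset.Icc 1 n \ {a, mval a}

def Dlist (a : ℕ) (L : Finset ℕ) : List ℕ := Finset.sort (insert (mval a) L) (· ≥ ·)

def Ulist (n a : ℕ) (L : Finset ℕ) : List ℕ :=
  Finset.sort (Finset.Icc 1 n \ insert a (insert (mval a) L)) (· ≤ ·)

def buildL (n : ℕ) (p : Σ _ : ℕ, Finset ℕ) : List ℕ :=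
  p.1 :: (Dlist p.1 p.2 ++ Ulist n p.1 p.2)

def PairSet (n : ℕ) : Finset (Σ _ : ℕ, Finset ℕ) :=
  (Finset.Icc 1 n).sigma (fun a => (Sa n a).powerset.filter (fun L => ∃ x ∈ L, a < x))

def VSet (n : ℕ) : Finset (List ℕ) :=
  ((List.range' 1 n).permutations.toFinset).filter (fun l => peaks l = {2})

lemma mval_lt_of_mem_sa {n a x : ℕ} (hx : x ∈ Sa n a) : mval a < x := by
  by_cases h : a = 1 <;>
    simp [Sa, mval, h, Finset.mem_sdiff, Finset.mem_Icc, Finset.mem_insert] at hx ⊢ <;> omega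

lemma mval_ne (a : ℕ) : mval a ≠ a := by
  by_cases h : a = 1 <;> simp [mval, h] <;> omega

lemma mval_le_two (a : ℕ) : 1 ≤ mval a ∧ mval a ≤ 2 := by
  by_cases h : a = 1 <;> simp [mval, h]

lemma range'_toFinset (n : ℕ) : (List.range' 1 n).toFinset = Finset.Icc 1 n := by
  ext x
  rw [List.mem_toFinset, List.mem_range'_1, Finset.mem_Icc]
  omega

lemma dlist_chain' (a : ℕ) (L : Finset ℕ) : List.Chain' (· > ·) (Dlist a L) :=
  List.isChain_iff_pairwise.2 (List.sortedGT_iff_pairwise.1 (Finset.sortedGT_sort _))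

lemma ulist_chain' (n a : ℕ) (L : Finset ℕ) : List.Chain' (· < ·) (Ulist n a L) :=
  List.isChain_iff_pairwise.2 (List.sortedLT_iff_pairwise.1 (Finset.sortedLT_sort _))

lemma dlist_toFinset (a : ℕ) (L : Finset ℕ) : (Dlist a L).toFinset = insert (mval a) L :=
  Finset.sort_toFinset _ _

lemma ulist_toFinset (n a : ℕ) (L : Finset ℕ) :
    (Ulist n a L).toFinset = Finset.Icc 1 n \ insert a (insert (mval a) L) :=
  Finset.sort_toFinset _ _

lemma dlist_ne_nil (a : ℕ) (L : Finset ℕ) : Dlist a L ≠ [] := by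
  intro h
  have : mval a ∈ Dlist a L := by
    rw [Dlist]
    exact (Finset.mem_sort _).2 (Finset.mem_insert_self _ _)
  rw [h] at this
  simp at this

lemma dlist_getLast {n a : ℕ} {L : Finset ℕ} (hL : L ⊆ Sa n a) :
    (Dlist a L).getLast (dlist_ne_nil a L) = mval a := by
  have hwm : (Dlist a L).getLast (dlist_ne_nil a L) ∈ Dlist a L := List.getLast_mem _
  have hwf : (Dlist a L).getLast (dlist_ne_nil a L) ∈ insert (mval a) L := by
    rw [← dlist_toFinset a L]; exact List.mem_toFinset.2 hwm
  rcases Finset.mem_insert.1 hwf with h | h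
  · exact h
  · have hm : mval a ∈ Dlist a L := by
      rw [Dlist]; exact (Finset.mem_sort _).2 (Finset.mem_insert_self _ _)
    have hle := getLast_le_of_chain' (dlist_chain' a L) (dlist_ne_nil a L) hm
    have := mval_lt_of_mem_sa (hL h)
    omega


lemma build_mem_and_recover {n : ℕ} (hn : 3 ≤ n) {a : ℕ} {L : Finset ℕ}
    (hp : (⟨a, L⟩ : Σ _ : ℕ, Finset ℕ) ∈ PairSet n) :
    buildL n ⟨a, L⟩ ∈ VSet n ∧ (buildL n ⟨a, L⟩).headD 0 = a ∧
      (descPre (buildL n ⟨a, L⟩).tail).dropLast.toFinset = L := by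
  obtain ⟨ha, hLpow⟩ := Finset.mem_sigma.1 hp
  rw [Finset.mem_filter, Finset.mem_powerset] at hLpow
  obtain ⟨hLsub, x₀, hx₀L, hax₀⟩ := hLpow
  have haIcc := Finset.mem_Icc.1 ha
  have hm12 := mval_le_two a
  have hmne := mval_ne a
  have hmL : mval a ∉ L := fun h => absurd (mval_lt_of_mem_sa (hLsub h)) (lt_irrefl _)
  have haL : a ∉ L := fun h => by
    have := hLsub h
    simp [Sa] at this
  have hDchain := dlist_chain' a L
  have hUchain := ulist_chain' n a L
  have hDfin := dlist_toFinset a L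
  have hUfin := ulist_toFinset n a L
  have hDne := dlist_ne_nil a L
  have hlast := dlist_getLast (n := n) hLsub
  have hDnodup : (Dlist a L).Nodup := Finset.sort_nodup _ _
  have hUnodup : (Ulist n a L).Nodup := Finset.sort_nodup _ _
  have hDlen : 2 ≤ (Dlist a L).length := by
    rw [Dlist, Finset.length_sort, Finset.card_insert_of_notMem hmL]
    have : 0 < L.card := Finset.card_pos.2 ⟨x₀, hx₀L⟩
    omega
  have hjunc : ∀ x ∈ (Dlist a L).getLast?, ∀ y ∈ (Ulist n a L).head?, x < y := by
    intro x hx y hy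
    rw [List.getLast?_eq_getLast hDne] at hx
    simp only [Option.mem_some_iff] at hx
    have hxm : x = mval a := by rw [← hx, hlast]
    have hyU : y ∈ Ulist n a L := List.mem_of_mem_head? hy
    have hyfin : y ∈ Finset.Icc 1 n \ insert a (insert (mval a) L) := by
      rw [← hUfin]; exact List.mem_toFinset.2 hyU
    have hySa : y ∈ Sa n a := by
      simp only [Finset.mem_sdiff, Finset.mem_insert] at hyfin
      simp only [Sa, Finset.mem_sdiff, Finset.mem_insert, Finset.mem_singleton]
      tauto
    have := mval_lt_of_mem_sa hySa
    omega
  have hnopk : NoPk (Dlist a L ++ Ulist n a L) := nopk_of _ _ hDchain hUchain hjunc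
  have hgetD0 : (Dlist a L ++ Ulist n a L).getD 0 0 = (Dlist a L).getD 0 0 :=
    List.getD_append _ _ _ _ (by omega)
  have hgetD1 : (Dlist a L ++ Ulist n a L).getD 1 0 = (Dlist a L).getD 1 0 :=
    List.getD_append _ _ _ _ (by omega)
  have hheadD : (Dlist a L).getD 0 0 = (Dlist a L).headD 0 := by
    cases hDl : Dlist a L with
    | nil => exact absurd hDl hDne
    | cons h t => rfl
  have hx₀D : x₀ ∈ Dlist a L := by
    rw [← List.mem_toFinset, hDfin]; exact Finset.mem_insert_of_mem hx₀L
  have hpk1 : a < (Dlist a L ++ Ulist n a L).getD 0 0 := by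
    rw [hgetD0, hheadD]
    exact lt_of_lt_of_le hax₀ (le_headD_of_chain' hDchain hx₀D)
  have hpk2 : (Dlist a L ++ Ulist n a L).getD 1 0 < (Dlist a L ++ Ulist n a L).getD 0 0 := by
    rw [hgetD0, hgetD1]
    exact chain'_getD hDchain (by omega)
  have hlenv : 2 ≤ (Dlist a L ++ Ulist n a L).length := by
    rw [List.length_append]; omega
  have hpeaks : peaks (a :: (Dlist a L ++ Ulist n a L)) = {2} :=
    (peaks_eq_char hlenv).2 ⟨hpk1, hpk2, hnopk⟩
  have hdisj : List.Disjoint (Dlist a L) (Ulist n a L) := by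
    intro x hxD hxU
    have h1 : x ∈ insert (mval a) L := by rw [← hDfin]; exact List.mem_toFinset.2 hxD
    have h2 : x ∈ Finset.Icc 1 n \ insert a (insert (mval a) L) := by
      rw [← hUfin]; exact List.mem_toFinset.2 hxU
    simp only [Finset.mem_sdiff, Finset.mem_insert] at h1 h2
    tauto
  have hnodupDU : (Dlist a L ++ Ulist n a L).Nodup := hDnodup.append hUnodup hdisj
  have haDU : a ∉ Dlist a L ++ Ulist n a L := by
    intro hmem
    rcases List.mem_append.1 hmem with h | h
    · have : a ∈ insert (mval a) L := by rw [← hDfin]; exact List.mem_toFinset.2 h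
      simp only [Finset.mem_insert] at this
      rcases this with h' | h'
      · exact hmne h'.symm
      · exact haL h'
    · have : a ∈ Finset.Icc 1 n \ insert a (insert (mval a) L) := by
        rw [← hUfin]; exact List.mem_toFinset.2 h
      simp at this
  have hnodup : (a :: (Dlist a L ++ Ulist n a L)).Nodup := List.nodup_cons.2 ⟨haDU, hnodupDU⟩
  have hsub : insert a (insert (mval a) L) ⊆ Finset.Icc 1 n := by
    intro x hx
    rcases Finset.mem_insert.1 hx with rfl | hx'
    · exact ha
    rcases Finset.mem_insert.1 hx' with rfl | hx''
    · exact Finset.mem_Icc.2 ⟨hm12.1, by omega⟩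
    · exact Finset.mem_Icc.2 (by
        have := hLsub hx''
        simp only [Sa, Finset.mem_sdiff, Finset.mem_Icc] at this
        exact this.1)
  have hfin : (a :: (Dlist a L ++ Ulist n a L)).toFinset = Finset.Icc 1 n := by
    simp only [List.toFinset_cons, List.toFinset_append, hDfin, hUfin]
    rw [← Finset.insert_union, Finset.union_sdiff_of_subset hsub]
  have hperm : (a :: (Dlist a L ++ Ulist n a L)).Perm (List.range' 1 n) := by
    apply List.perm_of_nodup_nodup_toFinset_eq hnodup List.nodup_range'
    rw [hfin, range'_toFinset]
  have hbuild : buildL n ⟨a, L⟩ = a :: (Dlist a L ++ Ulist n a L) := rfl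
  refine ⟨?_, rfl, ?_⟩
  · rw [hbuild, VSet, Finset.mem_filter, List.mem_toFinset, List.mem_permutations]
    exact ⟨hperm, hpeaks⟩
  · rw [hbuild]
    have htail : (a :: (Dlist a L ++ Ulist n a L)).tail = Dlist a L ++ Ulist n a L := rfl
    rw [htail, descPre_append _ _ hDne hDchain hjunc]
    have hsplit : (Dlist a L).dropLast ++ [mval a] = Dlist a L := by
      rw [← hlast]; exact List.dropLast_append_getLast hDne
    have hmnot : mval a ∉ (Dlist a L).dropLast := by
      intro hmem
      have := hDnodup
      rw [← hsplit, List.nodup_append] at this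
      exact this.2.2 _ hmem _ (List.mem_singleton_self _) rfl
    ext x
    simp only [List.mem_toFinset]
    constructor
    · intro hx
      have hxD : x ∈ Dlist a L := by rw [← hsplit]; exact List.mem_append.2 (Or.inl hx)
      have : x ∈ insert (mval a) L := by rw [← hDfin]; exact List.mem_toFinset.2 hxD
      rcases Finset.mem_insert.1 this with rfl | h
      · exact absurd hx hmnot
      · exact h
    · intro hx
      have hxD : x ∈ Dlist a L := by
        rw [← List.mem_toFinset, hDfin]; exact Finset.mem_insert_of_mem hx
      rw [← hsplit] at hxD
      rcases List.mem_append.1 hxD with h | h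
      · exact h
      · simp only [List.mem_singleton] at h
        subst h
        exact absurd hx hmL


lemma recover_mem_and_build {n : ℕ} (hn : 3 ≤ n) {l : List ℕ} (hl : l ∈ VSet n) :
    (⟨l.headD 0, (descPre l.tail).dropLast.toFinset⟩ : Σ _ : ℕ, Finset ℕ) ∈ PairSet n ∧
      buildL n ⟨l.headD 0, (descPre l.tail).dropLast.toFinset⟩ = l := by
  rw [VSet, Finset.mem_filter, List.mem_toFinset, List.mem_permutations] at hl
  obtain ⟨hperm, hpk⟩ := hl
  have hlen : l.length = n := by rw [hperm.length_eq, List.length_range']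
  cases l with
  | nil => rw [List.length_nil] at hlen; omega
  | cons a v =>
  simp only [List.tail_cons, List.headD_cons]
  have hv2 : 2 ≤ v.length := by
    rw [List.length_cons] at hlen; omega
  have hnd : (a :: v).Nodup := hperm.nodup_iff.2 List.nodup_range'
  obtain ⟨h1, h2, h3⟩ := (peaks_eq_char hv2).1 hpk
  obtain ⟨u, heq, hdch, huch, hjunc⟩ := dec v hnd.of_cons h3
  set d := descPre v with hdd
  have hfin : (a :: v).toFinset = Finset.Icc 1 n := by rw [List.toFinset_eq_of_perm _ _ hperm, range'_toFinset]
  have hav : a ∉ v := (List.nodup_cons.1 hnd).1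
  have hvfin : v.toFinset = Finset.Icc 1 n \ {a} := by
    ext x
    simp only [Finset.mem_sdiff, Finset.mem_singleton, ← hfin, List.mem_toFinset, List.mem_cons]
    constructor
    · intro hx
      exact ⟨Or.inr hx, fun he => hav (he ▸ hx)⟩
    · rintro ⟨h | h, hne⟩
      · exact absurd h hne
      · exact h
  have haIcc : a ∈ Finset.Icc 1 n := by
    rw [← hfin]; simp
  have hdne : d ≠ [] := by
    intro h
    rw [h, List.nil_append] at heq
    rw [heq] at h2 hv2
    have := chain'_getD huch (j := 0) (by omega)
    have e : u.getD (0+1) 0 = u.getD 1 0 := rfl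
    omega
  have hdlen : 2 ≤ d.length := by
    by_contra hlt
    push_neg at hlt
    have hpos : 0 < d.length := List.length_pos_iff.2 hdne
    have hone : d.length = 1 := by omega
    obtain ⟨x, hx⟩ := List.length_eq_one_iff.1 hone
    rw [hx] at heq hjunc
    cases u with
    | nil =>
      rw [heq] at hv2
      simp at hv2
    | cons y u' =>
      have hxy : x < y := hjunc x (by simp) y (by simp)
      have hv0 : v.getD 0 0 = x := by rw [heq]; rfl
      have hv1 : v.getD 1 0 = y := by rw [heq]; rfl
      omega
  have hlast_min : ∀ x ∈ v, d.getLast hdne ≤ x := by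
    intro x hx
    rw [heq] at hx
    rcases List.mem_append.1 hx with h | h
    · exact getLast_le_of_chain' hdch hdne h
    · cases u with
      | nil => simp at h
      | cons y u' =>
        have hly : d.getLast hdne < y :=
          hjunc _ (by rw [List.getLast?_eq_getLast hdne]; simp) y (by simp)
        have hyx := headD_le_of_chain' huch h
        simp only [List.headD_cons] at hyx
        omega
  have hlastv : d.getLast hdne ∈ v := by
    rw [heq]; exact List.mem_append.2 (Or.inl (List.getLast_mem _))
  have hm12 := mval_le_two a
  have hmne := mval_ne a
  have hlast : d.getLast hdne = mval a := by
    have hm_mem : mval a ∈ v.toFinset := by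
      rw [hvfin]
      simp only [Finset.mem_sdiff, Finset.mem_Icc, Finset.mem_singleton]
      exact ⟨⟨hm12.1, by omega⟩, hmne⟩
    have hle := hlast_min _ (List.mem_toFinset.1 hm_mem)
    have hlv : d.getLast hdne ∈ v.toFinset := List.mem_toFinset.2 hlastv
    rw [hvfin] at hlv
    simp only [Finset.mem_sdiff, Finset.mem_Icc, Finset.mem_singleton] at hlv
    obtain ⟨⟨hlv1, _⟩, hlv2⟩ := hlv
    by_cases hA : a = 1 <;> simp [mval, hA] at hle ⊢ <;> omega
  have hvnd : v.Nodup := hnd.of_cons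
  have hdu_nd : (d ++ u).Nodup := heq ▸ hvnd
  obtain ⟨hdnd, hund, hdudisj⟩ := List.nodup_append.1 hdu_nd
  have hsplit : d.dropLast ++ [mval a] = d := by
    rw [← hlast]; exact List.dropLast_append_getLast hdne
  have hmnotdrop : mval a ∉ d.dropLast := by
    intro hmem
    have hnd2 := hdnd
    rw [← hsplit, List.nodup_append] at hnd2
    exact hnd2.2.2 _ hmem _ (List.mem_singleton_self _) rfl
  have hdropsubv : ∀ x ∈ d.dropLast, x ∈ v := by
    intro x hx
    have hxd : x ∈ d := by rw [← hsplit]; exact List.mem_append.2 (Or.inl hx)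
    rw [heq]; exact List.mem_append.2 (Or.inl hxd)
  obtain ⟨d0, d1, dr, hd012⟩ : ∃ d0 d1 dr, d = d0 :: d1 :: dr := by
    rcases hdl : d with _ | ⟨x, _ | ⟨y, t⟩⟩
    · exact absurd hdl hdne
    · rw [hdl] at hdlen; simp at hdlen
    · exact ⟨x, y, t, rfl⟩
  have hd0drop : d0 ∈ d.dropLast := by
    rw [hd012]
    simp [List.dropLast_cons₂]
  have had0 : a < d0 := by
    have hv0 : v.getD 0 0 = d0 := by rw [heq, hd012]; rfl
    omega
  refine ⟨?_, ?_⟩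
  · rw [PairSet, Finset.mem_sigma]
    refine ⟨haIcc, ?_⟩
    rw [Finset.mem_filter, Finset.mem_powerset]
    refine ⟨?_, d0, List.mem_toFinset.2 hd0drop, had0⟩
    intro x hx
    rw [List.mem_toFinset] at hx
    have hxv := hdropsubv x hx
    have hxf : x ∈ Finset.Icc 1 n \ {a} := by rw [← hvfin]; exact List.mem_toFinset.2 hxv
    simp only [Finset.mem_sdiff, Finset.mem_singleton] at hxf
    simp only [Sa, Finset.mem_sdiff, Finset.mem_insert, Finset.mem_singleton]
    refine ⟨hxf.1, ?_⟩
    rintro (rfl | rfl)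
    · exact hxf.2 rfl
    · exact hmnotdrop hx
  · have hdfin : d.toFinset = insert (mval a) d.dropLast.toFinset := by
      conv_lhs => rw [← hsplit]
      rw [List.toFinset_append]
      simp [Finset.union_comm, Finset.insert_eq, -Finset.union_singleton]
    have hDsort : Finset.sort (insert (mval a) d.dropLast.toFinset) (· ≥ ·) = d := by
      rw [← hdfin]
      exact (List.toFinset_sort _ hdnd).2 ((List.isChain_iff_pairwise.1 hdch).imp le_of_lt)
    have hufin : Finset.Icc 1 n \ insert a (insert (mval a) d.dropLast.toFinset)
        = u.toFinset := by
      rw [← hdfin]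
      ext x
      simp only [List.mem_toFinset, Finset.mem_sdiff, Finset.mem_insert]
      constructor
      · rintro ⟨hxIcc, hnot⟩
        have hxv : x ∈ v := by
          rw [← List.mem_toFinset, hvfin]
          simp only [Finset.mem_sdiff, Finset.mem_singleton]
          exact ⟨hxIcc, fun he => hnot (Or.inl he)⟩
        rw [heq] at hxv
        rcases List.mem_append.1 hxv with h | h
        · exact absurd (Or.inr h) hnot
        · exact h
      · intro hx
        have hxv : x ∈ v := by rw [heq]; exact List.mem_append.2 (Or.inr hx)
        have hxf : x ∈ Finset.Icc 1 n \ {a} := by rw [← hvfin]; exact List.mem_toFinset.2 hxv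
        simp only [Finset.mem_sdiff, Finset.mem_singleton] at hxf
        refine ⟨hxf.1, ?_⟩
        rintro (rfl | hxd)
        · exact hxf.2 rfl
        · exact hdudisj _ hxd _ hx rfl
    have hUsort : Finset.sort
        (Finset.Icc 1 n \ insert a (insert (mval a) d.dropLast.toFinset)) (· ≤ ·) = u := by
      rw [hufin]
      exact (List.toFinset_sort _ hund).2 ((List.isChain_iff_pairwise.1 huch).imp le_of_lt)
    show a :: (Finset.sort (insert (mval a) d.dropLast.toFinset) (· ≥ ·) ++
        Finset.sort
          (Finset.Icc 1 n \ insert a (insert (mval a) d.dropLast.toFinset)) (· ≤ ·)) = a :: v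
    rw [hDsort, hUsort, ← heq]


lemma vset_card {n : ℕ} (hn : 3 ≤ n) : (VSet n).card = (PairSet n).card := by
  have himg : VSet n = (PairSet n).image (buildL n) := by
    ext l
    simp only [Finset.mem_image]
    constructor
    · intro hl
      exact ⟨_, (recover_mem_and_build hn hl).1, (recover_mem_and_build hn hl).2⟩
    · rintro ⟨⟨a, L⟩, hp, rfl⟩
      exact (build_mem_and_recover hn hp).1
  rw [himg]
  apply Finset.card_image_of_injOn
  rintro ⟨a, L⟩ hp ⟨a', L'⟩ hp' h
  have r1 := (build_mem_and_recover hn hp).2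
  have r2 := (build_mem_and_recover hn hp').2
  rw [h] at r1
  obtain ⟨e1, e2⟩ := r1
  obtain ⟨e1', e2'⟩ := r2
  have ha : a = a' := e1.symm.trans e1'
  have hL : L = L' := e2.symm.trans e2'
  subst ha
  subst hL
  rfl

lemma sa_card {n a : ℕ} (hn : 3 ≤ n) (ha : a ∈ Finset.Icc 1 n) : (Sa n a).card = n - 2 := by
  have hm12 := mval_le_two a
  have hmne := mval_ne a
  have hsub : ({a, mval a} : Finset ℕ) ⊆ Finset.Icc 1 n := by
    intro x hx
    rcases Finset.mem_insert.1 hx with rfl | hx'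
    · exact ha
    · rw [Finset.mem_singleton] at hx'
      subst hx'
      exact Finset.mem_Icc.2 ⟨hm12.1, by omega⟩
  rw [Sa, Finset.card_sdiff_of_subset hsub, Nat.card_Icc]
  have hnotm : a ∉ ({mval a} : Finset ℕ) := by
    simp only [Finset.mem_singleton]
    exact fun h => hmne h.symm
  have h2 : ({a, mval a} : Finset ℕ).card = 2 := by
    rw [Finset.card_insert_of_notMem hnotm, Finset.card_singleton]
  rw [h2]
  omega

lemma filter_card {n a : ℕ} (hn : 3 ≤ n) (ha : a ∈ Finset.Icc 1 n) :
    ((Sa n a).powerset.filter (fun L => ∃ x ∈ L, a < x)).card = 2^(n-2) - 2^(a-2) := by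
  have hcompl : (Sa n a).powerset.filter (fun L => ¬ ∃ x ∈ L, a < x)
      = ((Sa n a).filter (fun x => x ≤ a)).powerset := by
    ext L
    simp only [Finset.mem_filter, Finset.mem_powerset, not_exists, not_and, not_lt]
    constructor
    · rintro ⟨hsub, hall⟩
      intro x hx
      exact Finset.mem_filter.2 ⟨hsub hx, hall x hx⟩
    · intro hsub
      refine ⟨fun x hx => (Finset.mem_filter.1 (hsub hx)).1, ?_⟩
      intro x hx
      exact (Finset.mem_filter.1 (hsub hx)).2
  have hkey := Finset.card_filter_add_card_filter_not
    (s := (Sa n a).powerset) (p := fun L => ∃ x ∈ L, a < x)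
  rw [hcompl, Finset.card_powerset, Finset.card_powerset, sa_card hn ha] at hkey
  have hT : (Sa n a).filter (fun x => x ≤ a) = Finset.Icc 2 (a-1) := by
    ext x
    simp only [Sa, Finset.mem_filter, Finset.mem_sdiff, Finset.mem_Icc, Finset.mem_insert,
      Finset.mem_singleton]
    have haI := Finset.mem_Icc.1 ha
    by_cases hA : a = 1 <;> simp [mval, hA] <;> omega
  rw [hT, Nat.card_Icc] at hkey
  have e : a - 1 + 1 - 2 = a - 2 := by omega
  rw [e] at hkey
  omega

lemma geom : ∀ n : ℕ, 1 ≤ n → (∑ a ∈ Finset.Icc 1 n, 2^(a-2)) = 2^(n-1) := by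
  intro n hn
  induction n with
  | zero => omega
  | succ k ih =>
    rcases Nat.eq_or_lt_of_le hn with h | h
    · obtain rfl : k = 0 := by omega
      simp
    · have hk : 1 ≤ k := by omega
      rw [Finset.sum_Icc_succ_top (by omega : 1 ≤ k+1), ih hk]
      have e1 : k + 1 - 2 = k - 1 := by omega
      rw [e1, ← two_mul, ← pow_succ']
      congr 1
      omega

lemma pairset_card {n : ℕ} (hn : 3 ≤ n) : (PairSet n).card = n * 2^(n-2) - 2^(n-1) := by
  rw [PairSet, Finset.card_sigma]
  rw [Finset.sum_congr rfl (fun a ha => filter_card hn ha)]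
  have hsum2 : ∑ a ∈ Finset.Icc 1 n, 2^(a-2) = 2^(n-1) := geom n (by omega)
  have hle : ∀ a ∈ Finset.Icc 1 n, 2^(a-2) ≤ 2^(n-2) := by
    intro a ha
    exact Nat.pow_le_pow_right (by norm_num) (by have := Finset.mem_Icc.1 ha; omega)
  have hconst : ∑ _a ∈ Finset.Icc 1 n, 2^(n-2) = n * 2^(n-2) := by
    rw [Finset.sum_const, Nat.card_Icc, smul_eq_mul]
    have e : n + 1 - 1 = n := by omega
    rw [e]
  have hsplit : (∑ a ∈ Finset.Icc 1 n, (2^(n-2) - 2^(a-2))) + ∑ a ∈ Finset.Icc 1 n, 2^(a-2)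
      = ∑ _a ∈ Finset.Icc 1 n, 2^(n-2) := by
    rw [← Finset.sum_add_distrib]
    exact Finset.sum_congr rfl (fun a ha => Nat.sub_add_cancel (hle a ha))
  rw [hconst, hsum2] at hsplit
  omega


lemma numPerms_eq_card (n : ℕ) : numPerms n {2} = (VSet n).card := by
  rw [numPerms]
  have hset : {l : List ℕ | IsPermOf n l ∧ peaks l = {2}} = ↑(VSet n) := by
    ext l
    simp only [Set.mem_setOf_eq, VSet, Finset.coe_filter, IsPermOf, List.mem_toFinset,
      List.mem_permutations]
  rw [hset, Set.ncard_coe_finset]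

lemma numPerms_formula {n : ℕ} (hn : 3 ≤ n) : numPerms n {2} = (n-2) * 2^(n-2) := by
  rw [numPerms_eq_card, vset_card hn, pairset_card hn]
  have h1 : 2^(n-1) = 2 * 2^(n-2) := by
    rw [← pow_succ']
    congr 1
    omega
  rw [h1, ← Nat.sub_mul]

end Stmt17


theorem stmt_17 :
    numPerms 3 {2} = 2 ∧
      ∀ n : ℕ, 4 ≤ n → numPerms (n + 1) {2} = 2 * numPerms n {2} + 2 ^ (n - 1) := by
  constructor
  · rw [Stmt17.numPerms_formula (by norm_num)]
    norm_num
  · intro n hn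
    rw [Stmt17.numPerms_formula (by omega : 3 ≤ n + 1),
      Stmt17.numPerms_formula (by omega : 3 ≤ n)]
    obtain ⟨m, rfl⟩ := Nat.exists_eq_add_of_le hn
    have e1 : 4 + m + 1 - 2 = m + 3 := by omega
    have e2 : 4 + m - 2 = m + 2 := by omega
    have e3 : 4 + m - 1 = m + 3 := by omega
    rw [e1, e2, e3]
    ring
end
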